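/- Every parabolic automorphism φ of D is conjugate in the automorphism group to φ_i or to φ_{−i}: there exists an automorphism η of D such that φ(z) = η(φ_i(η₋₁(z))) for all z ∈ D, or φ(z) = η(φ_{−i}(η₋₁(z))) for all z ∈ D. -/

import Mathlib

/-- A (holomorphic) automorphism of the open unit disc `D = {z : |z| < 1}`:
a map of the form `z ↦ λ(z − a)/(1 − conj(a)·z)` with `a ∈ D` and `|λ| = 1`. -/
def IsDiscAut (φ : ℂ → ℂ) : Prop :=
  ∃ a lam : ℂ, ‖a‖ < 1 ∧ ‖lam‖ = 1 ∧
    ∀ z : ℂ, φ z = lam * (z - a) / (1 - (starRingEnd ℂ) a * z)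

/-- An elliptic automorphism: `φ ≠ id` with a fixed point in the open disc. -/
def IsEllipticAut (φ : ℂ → ℂ) : Prop :=
  IsDiscAut φ ∧ φ ≠ id ∧ ∃ a : ℂ, ‖a‖ < 1 ∧ φ a = a

/-- A parabolic automorphism: `φ ≠ id` with exactly one fixed point in the closed disc,
lying on the unit circle. -/
def IsParabolicAut (φ : ℂ → ℂ) : Prop :=
  IsDiscAut φ ∧ φ ≠ id ∧ ∃ w : ℂ, ‖w‖ = 1 ∧
    {z : ℂ | ‖z‖ ≤ 1 ∧ φ z = z} = {w}

/-- A hyperbolic automorphism: `φ ≠ id` with exactly two fixed points in the closed disc,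
both on the unit circle. -/
def IsHyperbolicAut (φ : ℂ → ℂ) : Prop :=
  IsDiscAut φ ∧ φ ≠ id ∧ ∃ w₁ w₂ : ℂ, w₁ ≠ w₂ ∧
    ‖w₁‖ = 1 ∧ ‖w₂‖ = 1 ∧
    {z : ℂ | ‖z‖ ≤ 1 ∧ φ z = z} = {w₁, w₂}

/-- The parabolic automorphism `φ_c(z) = (1 + c − 2z)/(2c − (1 + c)z)` fixing `1`. -/
noncomputable def phiC (c : ℂ) : ℂ → ℂ := fun z => (1 + c - 2 * z) / (2 * c - (1 + c) * z)

/-- The hyperbolic automorphism `ψ_r(z) = (z − r)/(1 − r z)` fixing `−1` and `1`. -/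
noncomputable def psiR (r : ℝ) : ℂ → ℂ := fun z => (z - (r : ℂ)) / (1 - (r : ℂ) * z)

/- ### Auxiliary lemmas -/

lemma one_sub_ne {x : ℂ} (hx : ‖x‖ < 1) : (1 : ℂ) - x ≠ 0 := by
  intro h
  rw [sub_eq_zero] at h
  rw [← h] at hx
  simp at hx

lemma one_add_ne {x : ℂ} (hx : ‖x‖ < 1) : (1 : ℂ) + x ≠ 0 := by
  intro h
  have hx1 : x = -1 := by linear_combination h
  rw [hx1] at hx
  simp at hx

lemma sq_identity (a z : ℂ) :
    Complex.normSq (1 - (starRingEnd ℂ) a * z) - Complex.normSq (z - a)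
      = (1 - Complex.normSq a) * (1 - Complex.normSq z) := by
  simp only [Complex.normSq_apply, Complex.sub_re, Complex.sub_im, Complex.mul_re,
    Complex.mul_im, Complex.one_re, Complex.one_im, Complex.conj_re, Complex.conj_im]
  ring

lemma aut_maps {a lam : ℂ} (ha : ‖a‖ < 1) (hl : ‖lam‖ = 1)
    {z : ℂ} (hz : ‖z‖ < 1) :
    ‖lam * (z - a) / (1 - (starRingEnd ℂ) a * z)‖ < 1 := by
  have habsa : ‖(starRingEnd ℂ) a * z‖ < 1 := by
    rw [norm_mul, Complex.norm_conj]
    nlinarith [norm_nonneg a, norm_nonneg z]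
  have hd := one_sub_ne habsa
  have hdpos : 0 < ‖1 - (starRingEnd ℂ) a * z‖ := norm_pos_iff.mpr hd
  rw [norm_div, div_lt_one hdpos, norm_mul, hl, one_mul]
  have h3 : Complex.normSq a < 1 := by
    rw [Complex.normSq_eq_norm_sq]; nlinarith [norm_nonneg a]
  have h4 : Complex.normSq z < 1 := by
    rw [Complex.normSq_eq_norm_sq]; nlinarith [norm_nonneg z]
  have h1 : ‖z - a‖ ^ 2 < ‖1 - (starRingEnd ℂ) a * z‖ ^ 2 := by
    rw [Complex.sq_norm, Complex.sq_norm]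
    nlinarith [sq_identity a z]
  nlinarith [norm_nonneg (z - a), norm_nonneg (1 - (starRingEnd ℂ) a * z)]

lemma mobius_frac (A B C E N D : ℂ) (hD : D ≠ 0) (h : C * D + E * N ≠ 0) :
    (A + B * (N / D)) / (C + E * (N / D)) = (A * D + B * N) / (C * D + E * N) := by
  have hY : C + E * (N / D) = (C * D + E * N) / D := by
    field_simp
  have hYne : C + E * (N / D) ≠ 0 := by
    rw [hY]; exact div_ne_zero h hD
  rw [div_eq_div_iff hYne h]
  field_simp
  all_goals ring

lemma c_sq {c : ℂ} (hc : c = Complex.I ∨ c = -Complex.I) : c ^ 2 = -1 := by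
  rcases hc with h | h
  · rw [h, Complex.I_sq]
  · rw [h, neg_sq, Complex.I_sq]

lemma c_ne_zero {c : ℂ} (hc : c = Complex.I ∨ c = -Complex.I) : c ≠ 0 := by
  rcases hc with h | h <;> simp [h]

lemma c_abs {c : ℂ} (hc : c = Complex.I ∨ c = -Complex.I) : ‖c‖ = 1 := by
  rcases hc with h | h <;> simp [h]

lemma c_half_abs {c : ℂ} (hc : c = Complex.I ∨ c = -Complex.I) :
    ‖(1 + c) / 2‖ < 1 := by
  have h2 : Complex.normSq ((1 + c) / 2) = 1 / 2 := by
    rcases hc with h | h <;> subst h <;>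
      simp [Complex.normSq_apply, Complex.div_re, Complex.div_im, Complex.normSq_apply] <;>
      norm_num
  nlinarith [Complex.sq_norm ((1 + c) / 2), norm_nonneg ((1 + c) / 2)]

lemma c_half_conj {c : ℂ} (hc : c = Complex.I ∨ c = -Complex.I) :
    (starRingEnd ℂ) ((1 + c) / 2) = (1 - c) / 2 := by
  rcases hc with h | h <;> subst h <;>
    simp [map_div₀, Complex.conj_I, sub_eq_add_neg, map_ofNat]

lemma phiC_den_factor {c u : ℂ} (hc : c = Complex.I ∨ c = -Complex.I) :
    2 * c - (1 + c) * u = 2 * c * (1 - (1 - c) / 2 * u) := by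
  have hc2 := c_sq hc
  linear_combination (-u) * hc2

lemma c_half_den_ne {c u : ℂ} (hc : c = Complex.I ∨ c = -Complex.I)
    (hu : ‖u‖ < 1) : (1 : ℂ) - (1 - c) / 2 * u ≠ 0 := by
  apply one_sub_ne
  rw [norm_mul]
  have h1 : ‖(1 - c) / 2‖ < 1 := by
    rw [← c_half_conj hc, Complex.norm_conj]
    exact c_half_abs hc
  nlinarith [norm_nonneg ((1 - c) / 2), norm_nonneg u]

lemma phiC_den_ne {c u : ℂ} (hc : c = Complex.I ∨ c = -Complex.I)
    (hu : ‖u‖ < 1) : 2 * c - (1 + c) * u ≠ 0 := by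
  rw [phiC_den_factor hc]
  exact mul_ne_zero (mul_ne_zero two_ne_zero (c_ne_zero hc)) (c_half_den_ne hc hu)

lemma phiC_eq {c : ℂ} (hc : c = Complex.I ∨ c = -Complex.I) {u : ℂ}
    (hu : ‖u‖ < 1) :
    phiC c u = c * (u - (1 + c) / 2) / (1 - (starRingEnd ℂ) ((1 + c) / 2) * u) := by
  have hc2 := c_sq hc
  have hD := c_half_den_ne hc hu
  show (1 + c - 2 * u) / (2 * c - (1 + c) * u) = _
  rw [c_half_conj hc, phiC_den_factor hc,
    div_eq_div_iff (mul_ne_zero (mul_ne_zero two_ne_zero (c_ne_zero hc)) hD) hD]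
  linear_combination (-(2 * u - 1 - c) * (1 - (1 - c) / 2 * u)) * hc2

lemma phiC_abs_lt {c : ℂ} (hc : c = Complex.I ∨ c = -Complex.I) {u : ℂ}
    (hu : ‖u‖ < 1) : ‖phiC c u‖ < 1 := by
  rw [phiC_eq hc hu]
  exact aut_maps (c_half_abs hc) (c_abs hc) hu

lemma phiC_frac (c N D : ℂ) (hD : D ≠ 0) (h : 2 * c * D + -(1 + c) * N ≠ 0) :
    phiC c (N / D) = ((1 + c) * D + -2 * N) / (2 * c * D + -(1 + c) * N) := by
  have h1 : (1 : ℂ) + c - 2 * (N / D) = (1 + c) + (-2) * (N / D) := by ring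
  have h2 : 2 * c - (1 + c) * (N / D) = 2 * c + (-(1 + c)) * (N / D) := by ring
  show (1 + c - 2 * (N / D)) / (2 * c - (1 + c) * (N / D)) = _
  rw [h1, h2, mobius_frac (1 + c) (-2) (2 * c) (-(1 + c)) N D hD h]

set_option maxHeartbeats 4000000 in
lemma key (z a b l w cw s r c : ℂ)
    (hb : b * w ^ 2 = -(l * a)) (hcw : w * cw = 1) (hr : r * (s + 1) = s - 1)
    (hs : s * (l + 1) = -(c * (l - 1))) (hw2 : (l - 1) * w = 2 * (l * a))
    (hc : c ^ 2 = -1) :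
    w ^ 3 * (s + 1) ^ 2 * (l + 1) ^ 2 * (l - 1) ^ 4 *
      (l * (z - a) * ((2 * c * (1 - r * (cw * z)) - (1 + c) * (cw * z - r)) +
        r * ((1 + c) * (1 - r * (cw * z)) - 2 * (cw * z - r))))
    = w ^ 3 * (s + 1) ^ 2 * (l + 1) ^ 2 * (l - 1) ^ 4 *
      (w * (((1 + c) * (1 - r * (cw * z)) - 2 * (cw * z - r)) +
        r * (2 * c * (1 - r * (cw * z)) - (1 + c) * (cw * z - r))) * (1 - b * z)) := by
  linear_combination
      ((1 : ℂ) * z * w^2 + (1 : ℂ) * z * w^2 * c + (2 : ℂ) * z * w^2 * r + (2 : ℂ) * z * w^2 * r * c + (1 : ℂ) * z * w^2 * r^2 + (1 : ℂ) * z * w^2 * r^2 * c + (2 : ℂ) * z * w^2 * s + (2 : ℂ) * z * w^2 * s * c + (4 : ℂ) * z * w^2 * s * r + (4 : ℂ) * z * w^2 * s * r * c + (2 : ℂ) * z * w^2 * s * r^2 + (2 : ℂ) * z * w^2 * s * r^2 * c + (1 : ℂ) * z * w^2 * s^2 + (1 : ℂ) * z * w^2 * s^2 * c + (2 : ℂ)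 * z * w^2 * s^2 * r + (2 : ℂ) * z * w^2 * s^2 * r * c + (1 : ℂ) * z * w^2 * s^2 * r^2 + (1 : ℂ) * z * w^2 * s^2 * r^2 * c + (-2 : ℂ) * z * l * w^2 + (-2 : ℂ) * z * l * w^2 * c + (-4 : ℂ) * z * l * w^2 * r + (-4 : ℂ) * z * l * w^2 * r * c + (-2 : ℂ) * z * l * w^2 * r^2 + (-2 : ℂ) * z * l * w^2 * r^2 * c + (-4 : ℂ) * z * l * w^2 * s + (-4 : ℂ) * z * l * w^2 * s * c + (-8 : ℂ) * z * l * w^2 * s * r + (-8 : ℂ) * z * l * w^2 * s * r * c + (-4 : ℂ) * z * l * w^2 * s * r^2 + (-4 : ℂ) * z * l * w^2 * s * r^2 * c + (-2 : ℂ) * z * l * w^2 * s^2 + (-2 : ℂ) * z * l * w^2 * s^2 * c + (-4 : ℂ) * z * l * w^2 * s^2 * r + (-4 : ℂ) * z * l * w^2 * s^2 * r * c + (-2 : ℂ) * z * l * w^2 * s^2 * r^2 + (-2 : ℂ) * z * l * w^2 * s^2 * r^2 * c + (-1 : ℂ) * z * l^2 * w^2 + (-1 : ℂ) * z * l^2 *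 w^2 * c + (-2 : ℂ) * z * l^2 * w^2 * r + (-2 : ℂ) * z * l^2 * w^2 * r * c + (-1 : ℂ) * z * l^2 * w^2 * r^2 + (-1 : ℂ) * z * l^2 * w^2 * r^2 * c + (-2 : ℂ) * z * l^2 * w^2 * s + (-2 : ℂ) * z * l^2 * w^2 * s * c + (-4 : ℂ) * z * l^2 * w^2 * s * r + (-4 : ℂ) * z * l^2 * w^2 * s * r * c + (-2 : ℂ) * z * l^2 * w^2 * s * r^2 + (-2 : ℂ) * z * l^2 * w^2 * s * r^2 * c + (-1 : ℂ) * z * l^2 * w^2 * s^2 + (-1 : ℂ) * z * l^2 * w^2 * s^2 * c + (-2 : ℂ) * z * l^2 * w^2 * s^2 * r + (-2 : ℂ) * z * l^2 * w^2 * s^2 * r * c + (-1 : ℂ) * z * l^2 * w^2 * s^2 * r^2 + (-1 : ℂ) * z * l^2 * w^2 * s^2 * r^2 * c + (4 : ℂ) * z * l^3 * w^2 + (4 : ℂ) * z * l^3 * w^2 * c + (8 : ℂ) * z * l^3 * w^2 * r + (8 : ℂ) * z * l^3 * w^2 * r * c + (4 : ℂ) * z * l^3 * w^2 * r^2 + (4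 : ℂ) * z * l^3 * w^2 * r^2 * c + (8 : ℂ) * z * l^3 * w^2 * s + (8 : ℂ) * z * l^3 * w^2 * s * c + (16 : ℂ) * z * l^3 * w^2 * s * r + (16 : ℂ) * z * l^3 * w^2 * s * r * c + (8 : ℂ) * z * l^3 * w^2 * s * r^2 + (8 : ℂ) * z * l^3 * w^2 * s * r^2 * c + (4 : ℂ) * z * l^3 * w^2 * s^2 + (4 : ℂ) * z * l^3 * w^2 * s^2 * c + (8 : ℂ) * z * l^3 * w^2 * s^2 * r + (8 : ℂ) * z * l^3 * w^2 * s^2 * r * c + (4 : ℂ) * z * l^3 * w^2 * s^2 * r^2 + (4 : ℂ) * z * l^3 * w^2 * s^2 * r^2 * c + (-1 : ℂ) * z * l^4 * w^2 + (-1 : ℂ) * z * l^4 * w^2 * c + (-2 : ℂ) * z * l^4 * w^2 * r + (-2 : ℂ) * z * l^4 * w^2 * r * c + (-1 : ℂ) * z * l^4 * w^2 * r^2 + (-1 : ℂ) * z * l^4 * w^2 * r^2 * c + (-2 : ℂ) * z * l^4 * w^2 * s + (-2 : ℂ) * z * l^4 * w^2 * s * c + (-4 : ℂ) * z * l^4 *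 w^2 * s * r + (-4 : ℂ) * z * l^4 * w^2 * s * r * c + (-2 : ℂ) * z * l^4 * w^2 * s * r^2 + (-2 : ℂ) * z * l^4 * w^2 * s * r^2 * c + (-1 : ℂ) * z * l^4 * w^2 * s^2 + (-1 : ℂ) * z * l^4 * w^2 * s^2 * c + (-2 : ℂ) * z * l^4 * w^2 * s^2 * r + (-2 : ℂ) * z * l^4 * w^2 * s^2 * r * c + (-1 : ℂ) * z * l^4 * w^2 * s^2 * r^2 + (-1 : ℂ) * z * l^4 * w^2 * s^2 * r^2 * c + (-2 : ℂ) * z * l^5 * w^2 + (-2 : ℂ) * z * l^5 * w^2 * c + (-4 : ℂ) * z * l^5 * w^2 * r + (-4 : ℂ) * z * l^5 * w^2 * r * c + (-2 : ℂ) * z * l^5 * w^2 * r^2 + (-2 : ℂ) * z * l^5 * w^2 * r^2 * c + (-4 : ℂ) * z * l^5 * w^2 * s + (-4 : ℂ) * z * l^5 * w^2 * s * c + (-8 : ℂ) * z * l^5 * w^2 * s * r + (-8 : ℂ) * z * l^5 * w^2 * s * r * c + (-4 : ℂ) * z * l^5 * w^2 * s * r^2 + (-4 : ℂ) * z * l^5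 * w^2 * s * r^2 * c + (-2 : ℂ) * z * l^5 * w^2 * s^2 + (-2 : ℂ) * z * l^5 * w^2 * s^2 * c + (-4 : ℂ) * z * l^5 * w^2 * s^2 * r + (-4 : ℂ) * z * l^5 * w^2 * s^2 * r * c + (-2 : ℂ) * z * l^5 * w^2 * s^2 * r^2 + (-2 : ℂ) * z * l^5 * w^2 * s^2 * r^2 * c + (1 : ℂ) * z * l^6 * w^2 + (1 : ℂ) * z * l^6 * w^2 * c + (2 : ℂ) * z * l^6 * w^2 * r + (2 : ℂ) * z * l^6 * w^2 * r * c + (1 : ℂ) * z * l^6 * w^2 * r^2 + (1 : ℂ) * z * l^6 * w^2 * r^2 * c + (2 : ℂ) * z * l^6 * w^2 * s + (2 : ℂ) * z * l^6 * w^2 * s * c + (4 : ℂ) * z * l^6 * w^2 * s * r + (4 : ℂ) * z * l^6 * w^2 * s * r * c + (2 : ℂ) * z * l^6 * w^2 * s * r^2 + (2 : ℂ) * z * l^6 * w^2 * s * r^2 * c + (1 : ℂ) * z * l^6 * w^2 * s^2 + (1 : ℂ) * z * l^6 * w^2 * s^2 * c + (2 : ℂ) * z * l^6 * w^2 * s^2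 * r + (2 : ℂ) * z * l^6 * w^2 * s^2 * r * c + (1 : ℂ) * z * l^6 * w^2 * s^2 * r^2 + (1 : ℂ) * z * l^6 * w^2 * s^2 * r^2 * c + (-2 : ℂ) * z^2 * w^2 * cw + (-2 : ℂ) * z^2 * w^2 * cw * r + (-2 : ℂ) * z^2 * w^2 * cw * r * c + (-2 : ℂ) * z^2 * w^2 * cw * r^2 * c + (-4 : ℂ) * z^2 * w^2 * cw * s + (-4 : ℂ) * z^2 * w^2 * cw * s * r + (-4 : ℂ) * z^2 * w^2 * cw * s * r * c + (-4 : ℂ) * z^2 * w^2 * cw * s * r^2 * c + (-2 : ℂ) * z^2 * w^2 * cw * s^2 + (-2 : ℂ) * z^2 * w^2 * cw * s^2 * r + (-2 : ℂ) * z^2 * w^2 * cw * s^2 * r * c + (-2 : ℂ) * z^2 * w^2 * cw * s^2 * r^2 * c + (4 : ℂ) * z^2 * l * w^2 * cw + (4 : ℂ) * z^2 * l * w^2 * cw * r + (4 : ℂ) * z^2 * l * w^2 * cw * r * c + (4 : ℂ) * z^2 * l * w^2 * cw * r^2 * c + (8 : ℂ) * z^2 * l * w^2 * cw * s + (8 :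 ℂ) * z^2 * l * w^2 * cw * s * r + (8 : ℂ) * z^2 * l * w^2 * cw * s * r * c + (8 : ℂ) * z^2 * l * w^2 * cw * s * r^2 * c + (4 : ℂ) * z^2 * l * w^2 * cw * s^2 + (4 : ℂ) * z^2 * l * w^2 * cw * s^2 * r + (4 : ℂ) * z^2 * l * w^2 * cw * s^2 * r * c + (4 : ℂ) * z^2 * l * w^2 * cw * s^2 * r^2 * c + (2 : ℂ) * z^2 * l^2 * w^2 * cw + (2 : ℂ) * z^2 * l^2 * w^2 * cw * r + (2 : ℂ) * z^2 * l^2 * w^2 * cw * r * c + (2 : ℂ) * z^2 * l^2 * w^2 * cw * r^2 * c + (4 : ℂ) * z^2 * l^2 * w^2 * cw * s + (4 : ℂ) * z^2 * l^2 * w^2 * cw * s * r + (4 : ℂ) * z^2 * l^2 * w^2 * cw * s * r * c + (4 : ℂ) * z^2 * l^2 * w^2 * cw * s * r^2 * c + (2 : ℂ) * z^2 * l^2 * w^2 * cw * s^2 + (2 : ℂ) * z^2 * l^2 * w^2 * cw * s^2 * r + (2 : ℂ) * z^2 * l^2 * w^2 * cw * s^2 * r * c + (2 : ℂ) * z^2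 * l^2 * w^2 * cw * s^2 * r^2 * c + (-8 : ℂ) * z^2 * l^3 * w^2 * cw + (-8 : ℂ) * z^2 * l^3 * w^2 * cw * r + (-8 : ℂ) * z^2 * l^3 * w^2 * cw * r * c + (-8 : ℂ) * z^2 * l^3 * w^2 * cw * r^2 * c + (-16 : ℂ) * z^2 * l^3 * w^2 * cw * s + (-16 : ℂ) * z^2 * l^3 * w^2 * cw * s * r + (-16 : ℂ) * z^2 * l^3 * w^2 * cw * s * r * c + (-16 : ℂ) * z^2 * l^3 * w^2 * cw * s * r^2 * c + (-8 : ℂ) * z^2 * l^3 * w^2 * cw * s^2 + (-8 : ℂ) * z^2 * l^3 * w^2 * cw * s^2 * r + (-8 : ℂ) * z^2 * l^3 * w^2 * cw * s^2 * r * c + (-8 : ℂ) * z^2 * l^3 * w^2 * cw * s^2 * r^2 * c + (2 : ℂ) * z^2 * l^4 * w^2 * cw + (2 : ℂ) * z^2 * l^4 * w^2 * cw * r + (2 : ℂ) * z^2 * l^4 * w^2 * cw * r * c + (2 : ℂ) * z^2 * l^4 * w^2 * cw * r^2 * c + (4 : ℂ) * z^2 * l^4 * w^2 * cw * s + (4 :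 ℂ) * z^2 * l^4 * w^2 * cw * s * r + (4 : ℂ) * z^2 * l^4 * w^2 * cw * s * r * c + (4 : ℂ) * z^2 * l^4 * w^2 * cw * s * r^2 * c + (2 : ℂ) * z^2 * l^4 * w^2 * cw * s^2 + (2 : ℂ) * z^2 * l^4 * w^2 * cw * s^2 * r + (2 : ℂ) * z^2 * l^4 * w^2 * cw * s^2 * r * c + (2 : ℂ) * z^2 * l^4 * w^2 * cw * s^2 * r^2 * c + (4 : ℂ) * z^2 * l^5 * w^2 * cw + (4 : ℂ) * z^2 * l^5 * w^2 * cw * r + (4 : ℂ) * z^2 * l^5 * w^2 * cw * r * c + (4 : ℂ) * z^2 * l^5 * w^2 * cw * r^2 * c + (8 : ℂ) * z^2 * l^5 * w^2 * cw * s + (8 : ℂ) * z^2 * l^5 * w^2 * cw * s * r + (8 : ℂ) * z^2 * l^5 * w^2 * cw * s * r * c + (8 : ℂ) * z^2 * l^5 * w^2 * cw * s * r^2 * c + (4 : ℂ) * z^2 * l^5 * w^2 * cw * s^2 + (4 : ℂ) * z^2 * l^5 * w^2 * cw * s^2 * r + (4 : ℂ) * z^2 * l^5 * w^2 * cw * s^2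 * r * c + (4 : ℂ) * z^2 * l^5 * w^2 * cw * s^2 * r^2 * c + (-2 : ℂ) * z^2 * l^6 * w^2 * cw + (-2 : ℂ) * z^2 * l^6 * w^2 * cw * r + (-2 : ℂ) * z^2 * l^6 * w^2 * cw * r * c + (-2 : ℂ) * z^2 * l^6 * w^2 * cw * r^2 * c + (-4 : ℂ) * z^2 * l^6 * w^2 * cw * s + (-4 : ℂ) * z^2 * l^6 * w^2 * cw * s * r + (-4 : ℂ) * z^2 * l^6 * w^2 * cw * s * r * c + (-4 : ℂ) * z^2 * l^6 * w^2 * cw * s * r^2 * c + (-2 : ℂ) * z^2 * l^6 * w^2 * cw * s^2 + (-2 : ℂ) * z^2 * l^6 * w^2 * cw * s^2 * r + (-2 : ℂ) * z^2 * l^6 * w^2 * cw * s^2 * r * c + (-2 : ℂ) * z^2 * l^6 * w^2 * cw * s^2 * r^2 * c) * hb +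
      ((2 : ℂ) * z * w^3 + (2 : ℂ) * z * w^3 * r + (2 : ℂ) * z * w^3 * r * c + (2 : ℂ) * z * w^3 * r^2 * c + (4 : ℂ) * z * w^3 * s + (4 : ℂ) * z * w^3 * s * r + (4 : ℂ) * z * w^3 * s * r * c + (4 : ℂ) * z * w^3 * s * r^2 * c + (2 : ℂ) * z * w^3 * s^2 + (2 : ℂ) * z * w^3 * s^2 * r + (2 : ℂ) * z * w^3 * s^2 * r * c + (2 : ℂ) * z * w^3 * s^2 * r^2 * c + (-4 : ℂ) * z * l * w^3 + (-4 : ℂ) * z * l * w^3 * r + (-4 : ℂ) * z * l * w^3 * r * c + (-4 : ℂ) * z * l * w^3 * r^2 * c + (-8 : ℂ) * z * l * w^3 * s + (-8 : ℂ) * z * l * w^3 * s * r + (-8 : ℂ) * z * l * w^3 * s * r * c + (-8 : ℂ) * z * l * w^3 * s * r^2 * c + (-4 : ℂ) * z * l * w^3 * s^2 + (-4 : ℂ) * z * l * w^3 * s^2 * r + (-4 : ℂ) * z * l * w^3 * s^2 * r * c + (-4 : ℂ) * z * l * w^3 * s^2 * r^2 * c + (-2 : ℂ) * z * l^2 * w^3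 + (-2 : ℂ) * z * l^2 * w^3 * r + (-2 : ℂ) * z * l^2 * w^3 * r * c + (-2 : ℂ) * z * l^2 * w^3 * r^2 * c + (-4 : ℂ) * z * l^2 * w^3 * s + (-4 : ℂ) * z * l^2 * w^3 * s * r + (-4 : ℂ) * z * l^2 * w^3 * s * r * c + (-4 : ℂ) * z * l^2 * w^3 * s * r^2 * c + (-2 : ℂ) * z * l^2 * w^3 * s^2 + (-2 : ℂ) * z * l^2 * w^3 * s^2 * r + (-2 : ℂ) * z * l^2 * w^3 * s^2 * r * c + (-2 : ℂ) * z * l^2 * w^3 * s^2 * r^2 * c + (8 : ℂ) * z * l^3 * w^3 + (8 : ℂ) * z * l^3 * w^3 * r + (8 : ℂ) * z * l^3 * w^3 * r * c + (8 : ℂ) * z * l^3 * w^3 * r^2 * c + (16 : ℂ) * z * l^3 * w^3 * s + (16 : ℂ) * z * l^3 * w^3 * s * r + (16 : ℂ) * z * l^3 * w^3 * s * r * c + (16 : ℂ) * z * l^3 * w^3 * s * r^2 * c + (8 : ℂ) * z * l^3 * w^3 * s^2 + (8 : ℂ) * z * l^3 * w^3 * s^2 * r + (8 : ℂ) * z *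 l^3 * w^3 * s^2 * r * c + (8 : ℂ) * z * l^3 * w^3 * s^2 * r^2 * c + (-2 : ℂ) * z * l^4 * w^3 + (-2 : ℂ) * z * l^4 * w^3 * r + (-2 : ℂ) * z * l^4 * w^3 * r * c + (-2 : ℂ) * z * l^4 * w^3 * r^2 * c + (-4 : ℂ) * z * l^4 * w^3 * s + (-4 : ℂ) * z * l^4 * w^3 * s * r + (-4 : ℂ) * z * l^4 * w^3 * s * r * c + (-4 : ℂ) * z * l^4 * w^3 * s * r^2 * c + (-2 : ℂ) * z * l^4 * w^3 * s^2 + (-2 : ℂ) * z * l^4 * w^3 * s^2 * r + (-2 : ℂ) * z * l^4 * w^3 * s^2 * r * c + (-2 : ℂ) * z * l^4 * w^3 * s^2 * r^2 * c + (-4 : ℂ) * z * l^5 * w^3 + (-4 : ℂ) * z * l^5 * w^3 * r + (-4 : ℂ) * z * l^5 * w^3 * r * c + (-4 : ℂ) * z * l^5 * w^3 * r^2 * c + (-8 : ℂ) * z * l^5 * w^3 * s + (-8 : ℂ) * z * l^5 * w^3 * s * r + (-8 : ℂ) * z * l^5 * w^3 * s * r * c + (-8 : ℂ) * z * l^5 *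 w^3 * s * r^2 * c + (-4 : ℂ) * z * l^5 * w^3 * s^2 + (-4 : ℂ) * z * l^5 * w^3 * s^2 * r + (-4 : ℂ) * z * l^5 * w^3 * s^2 * r * c + (-4 : ℂ) * z * l^5 * w^3 * s^2 * r^2 * c + (2 : ℂ) * z * l^6 * w^3 + (2 : ℂ) * z * l^6 * w^3 * r + (2 : ℂ) * z * l^6 * w^3 * r * c + (2 : ℂ) * z * l^6 * w^3 * r^2 * c + (4 : ℂ) * z * l^6 * w^3 * s + (4 : ℂ) * z * l^6 * w^3 * s * r + (4 : ℂ) * z * l^6 * w^3 * s * r * c + (4 : ℂ) * z * l^6 * w^3 * s * r^2 * c + (2 : ℂ) * z * l^6 * w^3 * s^2 + (2 : ℂ) * z * l^6 * w^3 * s^2 * r + (2 : ℂ) * z * l^6 * w^3 * s^2 * r * c + (2 : ℂ) * z * l^6 * w^3 * s^2 * r^2 * c + (1 : ℂ) * z * a * l * w^2 + (1 : ℂ) * z * a * l * w^2 * c + (2 : ℂ) * z * a * l * w^2 * r + (2 : ℂ) * z * a * l * w^2 * r * c + (1 : ℂ) * z * a * l * w^2 * r^2 + (1 : ℂ) * z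 * a * l * w^2 * r^2 * c + (2 : ℂ) * z * a * l * w^2 * s + (2 : ℂ) * z * a * l * w^2 * s * c + (4 : ℂ) * z * a * l * w^2 * s * r + (4 : ℂ) * z * a * l * w^2 * s * r * c + (2 : ℂ) * z * a * l * w^2 * s * r^2 + (2 : ℂ) * z * a * l * w^2 * s * r^2 * c + (1 : ℂ) * z * a * l * w^2 * s^2 + (1 : ℂ) * z * a * l * w^2 * s^2 * c + (2 : ℂ) * z * a * l * w^2 * s^2 * r + (2 : ℂ) * z * a * l * w^2 * s^2 * r * c + (1 : ℂ) * z * a * l * w^2 * s^2 * r^2 + (1 : ℂ) * z * a * l * w^2 * s^2 * r^2 * c + (-2 : ℂ) * z * a * l^2 * w^2 + (-2 : ℂ) * z * a * l^2 * w^2 * c + (-4 : ℂ) * z * a * l^2 * w^2 * r + (-4 : ℂ) * z * a * l^2 * w^2 * r * c + (-2 : ℂ) * z * a * l^2 * w^2 * r^2 + (-2 : ℂ) * z * a * l^2 * w^2 * r^2 * c + (-4 : ℂ) * z * a * l^2 * w^2 * s + (-4 : ℂ) * z * a * l^2 * w^2 * s * c + (-8 : ℂ) * z * a * l^2 * w^2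 * s * r + (-8 : ℂ) * z * a * l^2 * w^2 * s * r * c + (-4 : ℂ) * z * a * l^2 * w^2 * s * r^2 + (-4 : ℂ) * z * a * l^2 * w^2 * s * r^2 * c + (-2 : ℂ) * z * a * l^2 * w^2 * s^2 + (-2 : ℂ) * z * a * l^2 * w^2 * s^2 * c + (-4 : ℂ) * z * a * l^2 * w^2 * s^2 * r + (-4 : ℂ) * z * a * l^2 * w^2 * s^2 * r * c + (-2 : ℂ) * z * a * l^2 * w^2 * s^2 * r^2 + (-2 : ℂ) * z * a * l^2 * w^2 * s^2 * r^2 * c + (-1 : ℂ) * z * a * l^3 * w^2 + (-1 : ℂ) * z * a * l^3 * w^2 * c + (-2 : ℂ) * z * a * l^3 * w^2 * r + (-2 : ℂ) * z * a * l^3 * w^2 * r * c + (-1 : ℂ) * z * a * l^3 * w^2 * r^2 + (-1 : ℂ) * z * a * l^3 * w^2 * r^2 * c + (-2 : ℂ) * z * a * l^3 * w^2 * s + (-2 : ℂ) * z * a * l^3 * w^2 * s * c + (-4 : ℂ) * z * a * l^3 * w^2 * s * r + (-4 : ℂ) * z * a * l^3 * w^2 * s * r * c + (-2 : ℂ) *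 z * a * l^3 * w^2 * s * r^2 + (-2 : ℂ) * z * a * l^3 * w^2 * s * r^2 * c + (-1 : ℂ) * z * a * l^3 * w^2 * s^2 + (-1 : ℂ) * z * a * l^3 * w^2 * s^2 * c + (-2 : ℂ) * z * a * l^3 * w^2 * s^2 * r + (-2 : ℂ) * z * a * l^3 * w^2 * s^2 * r * c + (-1 : ℂ) * z * a * l^3 * w^2 * s^2 * r^2 + (-1 : ℂ) * z * a * l^3 * w^2 * s^2 * r^2 * c + (4 : ℂ) * z * a * l^4 * w^2 + (4 : ℂ) * z * a * l^4 * w^2 * c + (8 : ℂ) * z * a * l^4 * w^2 * r + (8 : ℂ) * z * a * l^4 * w^2 * r * c + (4 : ℂ) * z * a * l^4 * w^2 * r^2 + (4 : ℂ) * z * a * l^4 * w^2 * r^2 * c + (8 : ℂ) * z * a * l^4 * w^2 * s + (8 : ℂ) * z * a * l^4 * w^2 * s * c + (16 : ℂ) * z * a * l^4 * w^2 * s * r + (16 : ℂ) * z * a * l^4 * w^2 * s * r * c + (8 : ℂ) * z * a * l^4 * w^2 * s * r^2 + (8 : ℂ) * z * a * l^4 * w^2 * s * r^2 * c + (4 :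 ℂ) * z * a * l^4 * w^2 * s^2 + (4 : ℂ) * z * a * l^4 * w^2 * s^2 * c + (8 : ℂ) * z * a * l^4 * w^2 * s^2 * r + (8 : ℂ) * z * a * l^4 * w^2 * s^2 * r * c + (4 : ℂ) * z * a * l^4 * w^2 * s^2 * r^2 + (4 : ℂ) * z * a * l^4 * w^2 * s^2 * r^2 * c + (-1 : ℂ) * z * a * l^5 * w^2 + (-1 : ℂ) * z * a * l^5 * w^2 * c + (-2 : ℂ) * z * a * l^5 * w^2 * r + (-2 : ℂ) * z * a * l^5 * w^2 * r * c + (-1 : ℂ) * z * a * l^5 * w^2 * r^2 + (-1 : ℂ) * z * a * l^5 * w^2 * r^2 * c + (-2 : ℂ) * z * a * l^5 * w^2 * s + (-2 : ℂ) * z * a * l^5 * w^2 * s * c + (-4 : ℂ) * z * a * l^5 * w^2 * s * r + (-4 : ℂ) * z * a * l^5 * w^2 * s * r * c + (-2 : ℂ) * z * a * l^5 * w^2 * s * r^2 + (-2 : ℂ) * z * a * l^5 * w^2 * s * r^2 * c + (-1 : ℂ) * z * a * l^5 * w^2 * s^2 + (-1 : ℂ) * z * a * l^5 * w^2 * s^2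 * c + (-2 : ℂ) * z * a * l^5 * w^2 * s^2 * r + (-2 : ℂ) * z * a * l^5 * w^2 * s^2 * r * c + (-1 : ℂ) * z * a * l^5 * w^2 * s^2 * r^2 + (-1 : ℂ) * z * a * l^5 * w^2 * s^2 * r^2 * c + (-2 : ℂ) * z * a * l^6 * w^2 + (-2 : ℂ) * z * a * l^6 * w^2 * c + (-4 : ℂ) * z * a * l^6 * w^2 * r + (-4 : ℂ) * z * a * l^6 * w^2 * r * c + (-2 : ℂ) * z * a * l^6 * w^2 * r^2 + (-2 : ℂ) * z * a * l^6 * w^2 * r^2 * c + (-4 : ℂ) * z * a * l^6 * w^2 * s + (-4 : ℂ) * z * a * l^6 * w^2 * s * c + (-8 : ℂ) * z * a * l^6 * w^2 * s * r + (-8 : ℂ) * z * a * l^6 * w^2 * s * r * c + (-4 : ℂ) * z * a * l^6 * w^2 * s * r^2 + (-4 : ℂ) * z * a * l^6 * w^2 * s * r^2 * c + (-2 : ℂ) * z * a * l^6 * w^2 * s^2 + (-2 : ℂ) * z * a * l^6 * w^2 * s^2 * c + (-4 : ℂ) * z * a * l^6 * w^2 * s^2 * r + (-4 : ℂ) * z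 * a * l^6 * w^2 * s^2 * r * c + (-2 : ℂ) * z * a * l^6 * w^2 * s^2 * r^2 + (-2 : ℂ) * z * a * l^6 * w^2 * s^2 * r^2 * c + (1 : ℂ) * z * a * l^7 * w^2 + (1 : ℂ) * z * a * l^7 * w^2 * c + (2 : ℂ) * z * a * l^7 * w^2 * r + (2 : ℂ) * z * a * l^7 * w^2 * r * c + (1 : ℂ) * z * a * l^7 * w^2 * r^2 + (1 : ℂ) * z * a * l^7 * w^2 * r^2 * c + (2 : ℂ) * z * a * l^7 * w^2 * s + (2 : ℂ) * z * a * l^7 * w^2 * s * c + (4 : ℂ) * z * a * l^7 * w^2 * s * r + (4 : ℂ) * z * a * l^7 * w^2 * s * r * c + (2 : ℂ) * z * a * l^7 * w^2 * s * r^2 + (2 : ℂ) * z * a * l^7 * w^2 * s * r^2 * c + (1 : ℂ) * z * a * l^7 * w^2 * s^2 + (1 : ℂ) * z * a * l^7 * w^2 * s^2 * c + (2 : ℂ) * z * a * l^7 * w^2 * s^2 * r + (2 : ℂ) * z * a * l^7 * w^2 * s^2 * r * c + (1 : ℂ) * z * a * l^7 * w^2 * s^2 * r^2 + (1 : ℂ)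 * z * a * l^7 * w^2 * s^2 * r^2 * c + (-1 : ℂ) * z^2 * l * w^2 + (-1 : ℂ) * z^2 * l * w^2 * c + (-2 : ℂ) * z^2 * l * w^2 * r + (-2 : ℂ) * z^2 * l * w^2 * r * c + (-1 : ℂ) * z^2 * l * w^2 * r^2 + (-1 : ℂ) * z^2 * l * w^2 * r^2 * c + (-2 : ℂ) * z^2 * l * w^2 * s + (-2 : ℂ) * z^2 * l * w^2 * s * c + (-4 : ℂ) * z^2 * l * w^2 * s * r + (-4 : ℂ) * z^2 * l * w^2 * s * r * c + (-2 : ℂ) * z^2 * l * w^2 * s * r^2 + (-2 : ℂ) * z^2 * l * w^2 * s * r^2 * c + (-1 : ℂ) * z^2 * l * w^2 * s^2 + (-1 : ℂ) * z^2 * l * w^2 * s^2 * c + (-2 : ℂ) * z^2 * l * w^2 * s^2 * r + (-2 : ℂ) * z^2 * l * w^2 * s^2 * r * c + (-1 : ℂ) * z^2 * l * w^2 * s^2 * r^2 + (-1 : ℂ) * z^2 * l * w^2 * s^2 * r^2 * c + (2 : ℂ) * z^2 * l^2 * w^2 + (2 : ℂ) * z^2 * l^2 * w^2 * c + (4 :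 ℂ) * z^2 * l^2 * w^2 * r + (4 : ℂ) * z^2 * l^2 * w^2 * r * c + (2 : ℂ) * z^2 * l^2 * w^2 * r^2 + (2 : ℂ) * z^2 * l^2 * w^2 * r^2 * c + (4 : ℂ) * z^2 * l^2 * w^2 * s + (4 : ℂ) * z^2 * l^2 * w^2 * s * c + (8 : ℂ) * z^2 * l^2 * w^2 * s * r + (8 : ℂ) * z^2 * l^2 * w^2 * s * r * c + (4 : ℂ) * z^2 * l^2 * w^2 * s * r^2 + (4 : ℂ) * z^2 * l^2 * w^2 * s * r^2 * c + (2 : ℂ) * z^2 * l^2 * w^2 * s^2 + (2 : ℂ) * z^2 * l^2 * w^2 * s^2 * c + (4 : ℂ) * z^2 * l^2 * w^2 * s^2 * r + (4 : ℂ) * z^2 * l^2 * w^2 * s^2 * r * c + (2 : ℂ) * z^2 * l^2 * w^2 * s^2 * r^2 + (2 : ℂ) * z^2 * l^2 * w^2 * s^2 * r^2 * c + (1 : ℂ) * z^2 * l^3 * w^2 + (1 : ℂ) * z^2 * l^3 * w^2 * c + (2 : ℂ) * z^2 * l^3 * w^2 * r + (2 : ℂ) * z^2 * l^3 * w^2 *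 r * c + (1 : ℂ) * z^2 * l^3 * w^2 * r^2 + (1 : ℂ) * z^2 * l^3 * w^2 * r^2 * c + (2 : ℂ) * z^2 * l^3 * w^2 * s + (2 : ℂ) * z^2 * l^3 * w^2 * s * c + (4 : ℂ) * z^2 * l^3 * w^2 * s * r + (4 : ℂ) * z^2 * l^3 * w^2 * s * r * c + (2 : ℂ) * z^2 * l^3 * w^2 * s * r^2 + (2 : ℂ) * z^2 * l^3 * w^2 * s * r^2 * c + (1 : ℂ) * z^2 * l^3 * w^2 * s^2 + (1 : ℂ) * z^2 * l^3 * w^2 * s^2 * c + (2 : ℂ) * z^2 * l^3 * w^2 * s^2 * r + (2 : ℂ) * z^2 * l^3 * w^2 * s^2 * r * c + (1 : ℂ) * z^2 * l^3 * w^2 * s^2 * r^2 + (1 : ℂ) * z^2 * l^3 * w^2 * s^2 * r^2 * c + (-4 : ℂ) * z^2 * l^4 * w^2 + (-4 : ℂ) * z^2 * l^4 * w^2 * c + (-8 : ℂ) * z^2 * l^4 * w^2 * r + (-8 : ℂ) * z^2 * l^4 * w^2 * r * c + (-4 : ℂ) * z^2 * l^4 * w^2 * r^2 + (-4 : ℂ)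 * z^2 * l^4 * w^2 * r^2 * c + (-8 : ℂ) * z^2 * l^4 * w^2 * s + (-8 : ℂ) * z^2 * l^4 * w^2 * s * c + (-16 : ℂ) * z^2 * l^4 * w^2 * s * r + (-16 : ℂ) * z^2 * l^4 * w^2 * s * r * c + (-8 : ℂ) * z^2 * l^4 * w^2 * s * r^2 + (-8 : ℂ) * z^2 * l^4 * w^2 * s * r^2 * c + (-4 : ℂ) * z^2 * l^4 * w^2 * s^2 + (-4 : ℂ) * z^2 * l^4 * w^2 * s^2 * c + (-8 : ℂ) * z^2 * l^4 * w^2 * s^2 * r + (-8 : ℂ) * z^2 * l^4 * w^2 * s^2 * r * c + (-4 : ℂ) * z^2 * l^4 * w^2 * s^2 * r^2 + (-4 : ℂ) * z^2 * l^4 * w^2 * s^2 * r^2 * c + (1 : ℂ) * z^2 * l^5 * w^2 + (1 : ℂ) * z^2 * l^5 * w^2 * c + (2 : ℂ) * z^2 * l^5 * w^2 * r + (2 : ℂ) * z^2 * l^5 * w^2 * r * c + (1 : ℂ) * z^2 * l^5 * w^2 * r^2 + (1 : ℂ) * z^2 * l^5 * w^2 * r^2 * c + (2 : ℂ) * z^2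 * l^5 * w^2 * s + (2 : ℂ) * z^2 * l^5 * w^2 * s * c + (4 : ℂ) * z^2 * l^5 * w^2 * s * r + (4 : ℂ) * z^2 * l^5 * w^2 * s * r * c + (2 : ℂ) * z^2 * l^5 * w^2 * s * r^2 + (2 : ℂ) * z^2 * l^5 * w^2 * s * r^2 * c + (1 : ℂ) * z^2 * l^5 * w^2 * s^2 + (1 : ℂ) * z^2 * l^5 * w^2 * s^2 * c + (2 : ℂ) * z^2 * l^5 * w^2 * s^2 * r + (2 : ℂ) * z^2 * l^5 * w^2 * s^2 * r * c + (1 : ℂ) * z^2 * l^5 * w^2 * s^2 * r^2 + (1 : ℂ) * z^2 * l^5 * w^2 * s^2 * r^2 * c + (2 : ℂ) * z^2 * l^6 * w^2 + (2 : ℂ) * z^2 * l^6 * w^2 * c + (4 : ℂ) * z^2 * l^6 * w^2 * r + (4 : ℂ) * z^2 * l^6 * w^2 * r * c + (2 : ℂ) * z^2 * l^6 * w^2 * r^2 + (2 : ℂ) * z^2 * l^6 * w^2 * r^2 * c + (4 : ℂ) * z^2 * l^6 * w^2 * s + (4 : ℂ) * z^2 * l^6 * w^2 * s * c + (8 : ℂ)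 * z^2 * l^6 * w^2 * s * r + (8 : ℂ) * z^2 * l^6 * w^2 * s * r * c + (4 : ℂ) * z^2 * l^6 * w^2 * s * r^2 + (4 : ℂ) * z^2 * l^6 * w^2 * s * r^2 * c + (2 : ℂ) * z^2 * l^6 * w^2 * s^2 + (2 : ℂ) * z^2 * l^6 * w^2 * s^2 * c + (4 : ℂ) * z^2 * l^6 * w^2 * s^2 * r + (4 : ℂ) * z^2 * l^6 * w^2 * s^2 * r * c + (2 : ℂ) * z^2 * l^6 * w^2 * s^2 * r^2 + (2 : ℂ) * z^2 * l^6 * w^2 * s^2 * r^2 * c + (-1 : ℂ) * z^2 * l^7 * w^2 + (-1 : ℂ) * z^2 * l^7 * w^2 * c + (-2 : ℂ) * z^2 * l^7 * w^2 * r + (-2 : ℂ) * z^2 * l^7 * w^2 * r * c + (-1 : ℂ) * z^2 * l^7 * w^2 * r^2 + (-1 : ℂ) * z^2 * l^7 * w^2 * r^2 * c + (-2 : ℂ) * z^2 * l^7 * w^2 * s + (-2 : ℂ) * z^2 * l^7 * w^2 * s * c + (-4 : ℂ) * z^2 * l^7 * w^2 * s * r + (-4 : ℂ) * z^2 * l^7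 * w^2 * s * r * c + (-2 : ℂ) * z^2 * l^7 * w^2 * s * r^2 + (-2 : ℂ) * z^2 * l^7 * w^2 * s * r^2 * c + (-1 : ℂ) * z^2 * l^7 * w^2 * s^2 + (-1 : ℂ) * z^2 * l^7 * w^2 * s^2 * c + (-2 : ℂ) * z^2 * l^7 * w^2 * s^2 * r + (-2 : ℂ) * z^2 * l^7 * w^2 * s^2 * r * c + (-1 : ℂ) * z^2 * l^7 * w^2 * s^2 * r^2 + (-1 : ℂ) * z^2 * l^7 * w^2 * s^2 * r^2 * c + (2 : ℂ) * z^2 * a * l * w + (2 : ℂ) * z^2 * a * l * w * r + (2 : ℂ) * z^2 * a * l * w * r * c + (2 : ℂ) * z^2 * a * l * w * r^2 * c + (4 : ℂ) * z^2 * a * l * w * s + (4 : ℂ) * z^2 * a * l * w * s * r + (4 : ℂ) * z^2 * a * l * w * s * r * c + (4 : ℂ) * z^2 * a * l * w * s * r^2 * c + (2 : ℂ) * z^2 * a * l * w * s^2 + (2 : ℂ) * z^2 * a * l * w * s^2 * r + (2 : ℂ) * z^2 * a * l * w * s^2 * r * c + (2 : ℂ) * z^2 * a * l * w * s^2 * r^2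 * c + (-4 : ℂ) * z^2 * a * l^2 * w + (-4 : ℂ) * z^2 * a * l^2 * w * r + (-4 : ℂ) * z^2 * a * l^2 * w * r * c + (-4 : ℂ) * z^2 * a * l^2 * w * r^2 * c + (-8 : ℂ) * z^2 * a * l^2 * w * s + (-8 : ℂ) * z^2 * a * l^2 * w * s * r + (-8 : ℂ) * z^2 * a * l^2 * w * s * r * c + (-8 : ℂ) * z^2 * a * l^2 * w * s * r^2 * c + (-4 : ℂ) * z^2 * a * l^2 * w * s^2 + (-4 : ℂ) * z^2 * a * l^2 * w * s^2 * r + (-4 : ℂ) * z^2 * a * l^2 * w * s^2 * r * c + (-4 : ℂ) * z^2 * a * l^2 * w * s^2 * r^2 * c + (-2 : ℂ) * z^2 * a * l^3 * w + (-2 : ℂ) * z^2 * a * l^3 * w * r + (-2 : ℂ) * z^2 * a * l^3 * w * r * c + (-2 : ℂ) * z^2 * a * l^3 * w * r^2 * c + (-4 : ℂ) * z^2 * a * l^3 * w * s + (-4 : ℂ) * z^2 * a * l^3 * w * s * r + (-4 : ℂ) * z^2 * a * l^3 * w * s * r * c + (-4 : ℂ) * z^2 * a * l^3 * w * s * r^2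 * c + (-2 : ℂ) * z^2 * a * l^3 * w * s^2 + (-2 : ℂ) * z^2 * a * l^3 * w * s^2 * r + (-2 : ℂ) * z^2 * a * l^3 * w * s^2 * r * c + (-2 : ℂ) * z^2 * a * l^3 * w * s^2 * r^2 * c + (8 : ℂ) * z^2 * a * l^4 * w + (8 : ℂ) * z^2 * a * l^4 * w * r + (8 : ℂ) * z^2 * a * l^4 * w * r * c + (8 : ℂ) * z^2 * a * l^4 * w * r^2 * c + (16 : ℂ) * z^2 * a * l^4 * w * s + (16 : ℂ) * z^2 * a * l^4 * w * s * r + (16 : ℂ) * z^2 * a * l^4 * w * s * r * c + (16 : ℂ) * z^2 * a * l^4 * w * s * r^2 * c + (8 : ℂ) * z^2 * a * l^4 * w * s^2 + (8 : ℂ) * z^2 * a * l^4 * w * s^2 * r + (8 : ℂ) * z^2 * a * l^4 * w * s^2 * r * c + (8 : ℂ) * z^2 * a * l^4 * w * s^2 * r^2 * c + (-2 : ℂ) * z^2 * a * l^5 * w + (-2 : ℂ) * z^2 * a * l^5 * w * r + (-2 : ℂ) * z^2 * a * l^5 * w * r * c + (-2 : ℂ) * z^2 * a * l^5 * w * r^2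 * c + (-4 : ℂ) * z^2 * a * l^5 * w * s + (-4 : ℂ) * z^2 * a * l^5 * w * s * r + (-4 : ℂ) * z^2 * a * l^5 * w * s * r * c + (-4 : ℂ) * z^2 * a * l^5 * w * s * r^2 * c + (-2 : ℂ) * z^2 * a * l^5 * w * s^2 + (-2 : ℂ) * z^2 * a * l^5 * w * s^2 * r + (-2 : ℂ) * z^2 * a * l^5 * w * s^2 * r * c + (-2 : ℂ) * z^2 * a * l^5 * w * s^2 * r^2 * c + (-4 : ℂ) * z^2 * a * l^6 * w + (-4 : ℂ) * z^2 * a * l^6 * w * r + (-4 : ℂ) * z^2 * a * l^6 * w * r * c + (-4 : ℂ) * z^2 * a * l^6 * w * r^2 * c + (-8 : ℂ) * z^2 * a * l^6 * w * s + (-8 : ℂ) * z^2 * a * l^6 * w * s * r + (-8 : ℂ) * z^2 * a * l^6 * w * s * r * c + (-8 : ℂ) * z^2 * a * l^6 * w * s * r^2 * c + (-4 : ℂ) * z^2 * a * l^6 * w * s^2 + (-4 : ℂ) * z^2 * a * l^6 * w * s^2 * r + (-4 : ℂ) * z^2 * a * l^6 * w * s^2 * r * c + (-4 : ℂ) * z^2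 * a * l^6 * w * s^2 * r^2 * c + (2 : ℂ) * z^2 * a * l^7 * w + (2 : ℂ) * z^2 * a * l^7 * w * r + (2 : ℂ) * z^2 * a * l^7 * w * r * c + (2 : ℂ) * z^2 * a * l^7 * w * r^2 * c + (4 : ℂ) * z^2 * a * l^7 * w * s + (4 : ℂ) * z^2 * a * l^7 * w * s * r + (4 : ℂ) * z^2 * a * l^7 * w * s * r * c + (4 : ℂ) * z^2 * a * l^7 * w * s * r^2 * c + (2 : ℂ) * z^2 * a * l^7 * w * s^2 + (2 : ℂ) * z^2 * a * l^7 * w * s^2 * r + (2 : ℂ) * z^2 * a * l^7 * w * s^2 * r * c + (2 : ℂ) * z^2 * a * l^7 * w * s^2 * r^2 * c) * hcw +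
      ((-1 : ℂ) * w^4 + (-1 : ℂ) * w^4 * c + (-1 : ℂ) * w^4 * r + (-1 : ℂ) * w^4 * r * c + (-3 : ℂ) * w^4 * s + (-3 : ℂ) * w^4 * s * c + (-1 : ℂ) * w^4 * s * r + (-1 : ℂ) * w^4 * s * r * c + (2 : ℂ) * l * w^4 + (2 : ℂ) * l * w^4 * c + (2 : ℂ) * l * w^4 * r + (2 : ℂ) * l * w^4 * r * c + (6 : ℂ) * l * w^4 * s + (6 : ℂ) * l * w^4 * s * c + (2 : ℂ) * l * w^4 * s * r + (2 : ℂ) * l * w^4 * s * r * c + (1 : ℂ) * l^2 * w^4 + (1 : ℂ) * l^2 * w^4 * c + (1 : ℂ) * l^2 * w^4 * r + (1 : ℂ) * l^2 * w^4 * r * c + (3 : ℂ) * l^2 * w^4 * s + (3 : ℂ) * l^2 * w^4 * s * c + (1 : ℂ) * l^2 * w^4 * s * r + (1 : ℂ) * l^2 * w^4 * s * r * c + (-4 : ℂ) * l^3 * w^4 + (-4 : ℂ) * l^3 * w^4 * c + (-4 : ℂ) * l^3 * w^4 * r + (-4 : ℂ) * l^3 * w^4 * r * c + (-12 : ℂ)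 * l^3 * w^4 * s + (-12 : ℂ) * l^3 * w^4 * s * c + (-4 : ℂ) * l^3 * w^4 * s * r + (-4 : ℂ) * l^3 * w^4 * s * r * c + (1 : ℂ) * l^4 * w^4 + (1 : ℂ) * l^4 * w^4 * c + (1 : ℂ) * l^4 * w^4 * r + (1 : ℂ) * l^4 * w^4 * r * c + (3 : ℂ) * l^4 * w^4 * s + (3 : ℂ) * l^4 * w^4 * s * c + (1 : ℂ) * l^4 * w^4 * s * r + (1 : ℂ) * l^4 * w^4 * s * r * c + (2 : ℂ) * l^5 * w^4 + (2 : ℂ) * l^5 * w^4 * c + (2 : ℂ) * l^5 * w^4 * r + (2 : ℂ) * l^5 * w^4 * r * c + (6 : ℂ) * l^5 * w^4 * s + (6 : ℂ) * l^5 * w^4 * s * c + (2 : ℂ) * l^5 * w^4 * s * r + (2 : ℂ) * l^5 * w^4 * s * r * c + (-1 : ℂ) * l^6 * w^4 + (-1 : ℂ) * l^6 * w^4 * c + (-1 : ℂ) * l^6 * w^4 * r + (-1 : ℂ) * l^6 * w^4 * r * c + (-3 : ℂ) * l^6 * w^4 * s + (-3 : ℂ) * l^6 * w^4 * s * c + (-1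 : ℂ) * l^6 * w^4 * s * r + (-1 : ℂ) * l^6 * w^4 * s * r * c + (-2 : ℂ) * a * l * w^3 * c + (-2 : ℂ) * a * l * w^3 * r + (-4 : ℂ) * a * l * w^3 * s + (-2 : ℂ) * a * l * w^3 * s * c + (-2 : ℂ) * a * l * w^3 * s * r + (4 : ℂ) * a * l^2 * w^3 * c + (4 : ℂ) * a * l^2 * w^3 * r + (8 : ℂ) * a * l^2 * w^3 * s + (4 : ℂ) * a * l^2 * w^3 * s * c + (4 : ℂ) * a * l^2 * w^3 * s * r + (2 : ℂ) * a * l^3 * w^3 * c + (2 : ℂ) * a * l^3 * w^3 * r + (4 : ℂ) * a * l^3 * w^3 * s + (2 : ℂ) * a * l^3 * w^3 * s * c + (2 : ℂ) * a * l^3 * w^3 * s * r + (-8 : ℂ) * a * l^4 * w^3 * c + (-8 : ℂ) * a * l^4 * w^3 * r + (-16 : ℂ) * a * l^4 * w^3 * s + (-8 : ℂ) * a * l^4 * w^3 * s * c + (-8 : ℂ) * a * l^4 * w^3 * s * r + (2 : ℂ) * a * l^5 * w^3 * c + (2 : ℂ) * a * l^5 * w^3 * r + (4 : ℂ) * a *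 l^5 * w^3 * s + (2 : ℂ) * a * l^5 * w^3 * s * c + (2 : ℂ) * a * l^5 * w^3 * s * r + (4 : ℂ) * a * l^6 * w^3 * c + (4 : ℂ) * a * l^6 * w^3 * r + (8 : ℂ) * a * l^6 * w^3 * s + (4 : ℂ) * a * l^6 * w^3 * s * c + (4 : ℂ) * a * l^6 * w^3 * s * r + (-2 : ℂ) * a * l^7 * w^3 * c + (-2 : ℂ) * a * l^7 * w^3 * r + (-4 : ℂ) * a * l^7 * w^3 * s + (-2 : ℂ) * a * l^7 * w^3 * s * c + (-2 : ℂ) * a * l^7 * w^3 * s * r + (2 : ℂ) * z * w^3 + (2 : ℂ) * z * w^3 * r * c + (2 : ℂ) * z * w^3 * s + (4 : ℂ) * z * w^3 * s * c + (2 : ℂ) * z * w^3 * s * r * c + (-4 : ℂ) * z * l * w^3 + (2 : ℂ) * z * l * w^3 * c + (2 : ℂ) * z * l * w^3 * r + (-4 : ℂ) * z * l * w^3 * r * c + (-6 : ℂ) * z * l * w^3 * s * c + (2 : ℂ) * z * l * w^3 * s * r + (-4 : ℂ) * z * l * w^3 * s * r * c + (-2 : ℂ) * z * l^2 * w^3 +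 (-4 : ℂ) * z * l^2 * w^3 * c + (-4 : ℂ) * z * l^2 * w^3 * r + (-2 : ℂ) * z * l^2 * w^3 * r * c + (-10 : ℂ) * z * l^2 * w^3 * s + (-8 : ℂ) * z * l^2 * w^3 * s * c + (-4 : ℂ) * z * l^2 * w^3 * s * r + (-2 : ℂ) * z * l^2 * w^3 * s * r * c + (8 : ℂ) * z * l^3 * w^3 + (-2 : ℂ) * z * l^3 * w^3 * c + (-2 : ℂ) * z * l^3 * w^3 * r + (8 : ℂ) * z * l^3 * w^3 * r * c + (4 : ℂ) * z * l^3 * w^3 * s + (14 : ℂ) * z * l^3 * w^3 * s * c + (-2 : ℂ) * z * l^3 * w^3 * s * r + (8 : ℂ) * z * l^3 * w^3 * s * r * c + (-2 : ℂ) * z * l^4 * w^3 + (8 : ℂ) * z * l^4 * w^3 * c + (8 : ℂ) * z * l^4 * w^3 * r + (-2 : ℂ) * z * l^4 * w^3 * r * c + (14 : ℂ) * z * l^4 * w^3 * s + (4 : ℂ) * z * l^4 * w^3 * s * c + (8 : ℂ) * z * l^4 * w^3 * s * r + (-2 : ℂ) * z * l^4 * w^3 * s * r * c + (-4 : ℂ)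 * z * l^5 * w^3 + (-2 : ℂ) * z * l^5 * w^3 * c + (-2 : ℂ) * z * l^5 * w^3 * r + (-4 : ℂ) * z * l^5 * w^3 * r * c + (-8 : ℂ) * z * l^5 * w^3 * s + (-10 : ℂ) * z * l^5 * w^3 * s * c + (-2 : ℂ) * z * l^5 * w^3 * s * r + (-4 : ℂ) * z * l^5 * w^3 * s * r * c + (2 : ℂ) * z * l^6 * w^3 + (-4 : ℂ) * z * l^6 * w^3 * c + (-4 : ℂ) * z * l^6 * w^3 * r + (2 : ℂ) * z * l^6 * w^3 * r * c + (-6 : ℂ) * z * l^6 * w^3 * s + (-4 : ℂ) * z * l^6 * w^3 * s * r + (2 : ℂ) * z * l^6 * w^3 * s * r * c + (2 : ℂ) * z * l^7 * w^3 * c + (2 : ℂ) * z * l^7 * w^3 * r + (4 : ℂ) * z * l^7 * w^3 * s + (2 : ℂ) * z * l^7 * w^3 * s * c + (2 : ℂ) * z * l^7 * w^3 * s * r + (-1 : ℂ) * z^2 * l * w^2 + (-1 : ℂ) * z^2 * l * w^2 * c + (-1 : ℂ) * z^2 * l * w^2 * r + (-1 : ℂ) * z^2 * l * w^2 * r * c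 + (-3 : ℂ) * z^2 * l * w^2 * s + (-3 : ℂ) * z^2 * l * w^2 * s * c + (-1 : ℂ) * z^2 * l * w^2 * s * r + (-1 : ℂ) * z^2 * l * w^2 * s * r * c + (2 : ℂ) * z^2 * l^2 * w^2 + (2 : ℂ) * z^2 * l^2 * w^2 * c + (2 : ℂ) * z^2 * l^2 * w^2 * r + (2 : ℂ) * z^2 * l^2 * w^2 * r * c + (6 : ℂ) * z^2 * l^2 * w^2 * s + (6 : ℂ) * z^2 * l^2 * w^2 * s * c + (2 : ℂ) * z^2 * l^2 * w^2 * s * r + (2 : ℂ) * z^2 * l^2 * w^2 * s * r * c + (1 : ℂ) * z^2 * l^3 * w^2 + (1 : ℂ) * z^2 * l^3 * w^2 * c + (1 : ℂ) * z^2 * l^3 * w^2 * r + (1 : ℂ) * z^2 * l^3 * w^2 * r * c + (3 : ℂ) * z^2 * l^3 * w^2 * s + (3 : ℂ) * z^2 * l^3 * w^2 * s * c + (1 : ℂ) * z^2 * l^3 * w^2 * s * r + (1 : ℂ) * z^2 * l^3 * w^2 * s * r * c + (-4 : ℂ) * z^2 * l^4 * w^2 + (-4 : ℂ) * z^2 *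 l^4 * w^2 * c + (-4 : ℂ) * z^2 * l^4 * w^2 * r + (-4 : ℂ) * z^2 * l^4 * w^2 * r * c + (-12 : ℂ) * z^2 * l^4 * w^2 * s + (-12 : ℂ) * z^2 * l^4 * w^2 * s * c + (-4 : ℂ) * z^2 * l^4 * w^2 * s * r + (-4 : ℂ) * z^2 * l^4 * w^2 * s * r * c + (1 : ℂ) * z^2 * l^5 * w^2 + (1 : ℂ) * z^2 * l^5 * w^2 * c + (1 : ℂ) * z^2 * l^5 * w^2 * r + (1 : ℂ) * z^2 * l^5 * w^2 * r * c + (3 : ℂ) * z^2 * l^5 * w^2 * s + (3 : ℂ) * z^2 * l^5 * w^2 * s * c + (1 : ℂ) * z^2 * l^5 * w^2 * s * r + (1 : ℂ) * z^2 * l^5 * w^2 * s * r * c + (2 : ℂ) * z^2 * l^6 * w^2 + (2 : ℂ) * z^2 * l^6 * w^2 * c + (2 : ℂ) * z^2 * l^6 * w^2 * r + (2 : ℂ) * z^2 * l^6 * w^2 * r * c + (6 : ℂ) * z^2 * l^6 * w^2 * s + (6 : ℂ) * z^2 * l^6 * w^2 * s * c + (2 : ℂ) * z^2 * l^6 * w^2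 * s * r + (2 : ℂ) * z^2 * l^6 * w^2 * s * r * c + (-1 : ℂ) * z^2 * l^7 * w^2 + (-1 : ℂ) * z^2 * l^7 * w^2 * c + (-1 : ℂ) * z^2 * l^7 * w^2 * r + (-1 : ℂ) * z^2 * l^7 * w^2 * r * c + (-3 : ℂ) * z^2 * l^7 * w^2 * s + (-3 : ℂ) * z^2 * l^7 * w^2 * s * c + (-1 : ℂ) * z^2 * l^7 * w^2 * s * r + (-1 : ℂ) * z^2 * l^7 * w^2 * s * r * c + (2 : ℂ) * z^2 * a * l * w + (2 : ℂ) * z^2 * a * l * w * r * c + (2 : ℂ) * z^2 * a * l * w * s + (4 : ℂ) * z^2 * a * l * w * s * c + (2 : ℂ) * z^2 * a * l * w * s * r * c + (-4 : ℂ) * z^2 * a * l^2 * w + (-4 : ℂ) * z^2 * a * l^2 * w * r * c + (-4 : ℂ) * z^2 * a * l^2 * w * s + (-8 : ℂ) * z^2 * a * l^2 * w * s * c + (-4 : ℂ) * z^2 * a * l^2 * w * s * r * c + (-2 : ℂ) * z^2 * a * l^3 * w + (-2 : ℂ) * z^2 * a * l^3 * w * r * c + (-2 : ℂ) * z^2 *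 a * l^3 * w * s + (-4 : ℂ) * z^2 * a * l^3 * w * s * c + (-2 : ℂ) * z^2 * a * l^3 * w * s * r * c + (8 : ℂ) * z^2 * a * l^4 * w + (8 : ℂ) * z^2 * a * l^4 * w * r * c + (8 : ℂ) * z^2 * a * l^4 * w * s + (16 : ℂ) * z^2 * a * l^4 * w * s * c + (8 : ℂ) * z^2 * a * l^4 * w * s * r * c + (-2 : ℂ) * z^2 * a * l^5 * w + (-2 : ℂ) * z^2 * a * l^5 * w * r * c + (-2 : ℂ) * z^2 * a * l^5 * w * s + (-4 : ℂ) * z^2 * a * l^5 * w * s * c + (-2 : ℂ) * z^2 * a * l^5 * w * s * r * c + (-4 : ℂ) * z^2 * a * l^6 * w + (-4 : ℂ) * z^2 * a * l^6 * w * r * c + (-4 : ℂ) * z^2 * a * l^6 * w * s + (-8 : ℂ) * z^2 * a * l^6 * w * s * c + (-4 : ℂ) * z^2 * a * l^6 * w * s * r * c + (2 : ℂ) * z^2 * a * l^7 * w + (2 : ℂ) * z^2 * a * l^7 * w * r * c + (2 : ℂ) * z^2 * a * l^7 * w * s + (4 : ℂ) * z^2 * a * l^7 * w * s * c + (2 :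 ℂ) * z^2 * a * l^7 * w * s * r * c) * hr +
      ((-4 : ℂ) * w^4 * c + (-4 : ℂ) * w^4 * c^2 + (-4 : ℂ) * w^4 * s + (-4 : ℂ) * w^4 * s * c + (20 : ℂ) * l * w^4 * c + (20 : ℂ) * l * w^4 * c^2 + (12 : ℂ) * l * w^4 * s + (12 : ℂ) * l * w^4 * s * c + (-40 : ℂ) * l^2 * w^4 * c + (-40 : ℂ) * l^2 * w^4 * c^2 + (-8 : ℂ) * l^2 * w^4 * s + (-8 : ℂ) * l^2 * w^4 * s * c + (40 : ℂ) * l^3 * w^4 * c + (40 : ℂ) * l^3 * w^4 * c^2 + (-8 : ℂ) * l^3 * w^4 * s + (-8 : ℂ) * l^3 * w^4 * s * c + (-20 : ℂ) * l^4 * w^4 * c + (-20 : ℂ) * l^4 * w^4 * c^2 + (12 : ℂ) * l^4 * w^4 * s + (12 : ℂ) * l^4 * w^4 * s * c + (4 : ℂ) * l^5 * w^4 * c + (4 : ℂ) * l^5 * w^4 * c^2 + (-4 : ℂ) * l^5 * w^4 * s + (-4 : ℂ) * l^5 * w^4 * s * c + (4 : ℂ) * a * l * w^3 + (-8 : ℂ)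 * a * l * w^3 * c + (-4 : ℂ) * a * l * w^3 * c^2 + (-4 : ℂ) * a * l * w^3 * s + (-4 : ℂ) * a * l * w^3 * s * c + (-12 : ℂ) * a * l^2 * w^3 + (32 : ℂ) * a * l^2 * w^3 * c + (20 : ℂ) * a * l^2 * w^3 * c^2 + (12 : ℂ) * a * l^2 * w^3 * s + (12 : ℂ) * a * l^2 * w^3 * s * c + (8 : ℂ) * a * l^3 * w^3 + (-48 : ℂ) * a * l^3 * w^3 * c + (-40 : ℂ) * a * l^3 * w^3 * c^2 + (-8 : ℂ) * a * l^3 * w^3 * s + (-8 : ℂ) * a * l^3 * w^3 * s * c + (8 : ℂ) * a * l^4 * w^3 + (32 : ℂ) * a * l^4 * w^3 * c + (40 : ℂ) * a * l^4 * w^3 * c^2 + (-8 : ℂ) * a * l^4 * w^3 * s + (-8 : ℂ) * a * l^4 * w^3 * s * c + (-12 : ℂ) * a * l^5 * w^3 + (-8 : ℂ) * a * l^5 * w^3 * c + (-20 : ℂ) * a * l^5 * w^3 * c^2 + (12 : ℂ) * a * l^5 * w^3 * s + (12 : ℂ) * a * l^5 * w^3 * s * c + (4 : ℂ) * a * l^6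 * w^3 + (4 : ℂ) * a * l^6 * w^3 * c^2 + (-4 : ℂ) * a * l^6 * w^3 * s + (-4 : ℂ) * a * l^6 * w^3 * s * c + (4 : ℂ) * z * w^3 + (4 : ℂ) * z * w^3 * c^2 + (4 : ℂ) * z * w^3 * s + (4 : ℂ) * z * w^3 * s * c + (-16 : ℂ) * z * l * w^3 + (-16 : ℂ) * z * l * w^3 * c^2 + (-8 : ℂ) * z * l * w^3 * s + (-8 : ℂ) * z * l * w^3 * s * c + (20 : ℂ) * z * l^2 * w^3 + (20 : ℂ) * z * l^2 * w^3 * c^2 + (-4 : ℂ) * z * l^2 * w^3 * s + (-4 : ℂ) * z * l^2 * w^3 * s * c + (16 : ℂ) * z * l^3 * w^3 * s + (16 : ℂ) * z * l^3 * w^3 * s * c + (-20 : ℂ) * z * l^4 * w^3 + (-20 : ℂ) * z * l^4 * w^3 * c^2 + (-4 : ℂ) * z * l^4 * w^3 * s + (-4 : ℂ) * z * l^4 * w^3 * s * c + (16 : ℂ) * z * l^5 * w^3 + (16 : ℂ) * z * l^5 * w^3 * c^2 + (-8 : ℂ) * z * l^5 * w^3 * s + (-8 : ℂ) * z * l^5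 * w^3 * s * c + (-4 : ℂ) * z * l^6 * w^3 + (-4 : ℂ) * z * l^6 * w^3 * c^2 + (4 : ℂ) * z * l^6 * w^3 * s + (4 : ℂ) * z * l^6 * w^3 * s * c + (-4 : ℂ) * z^2 * l * w^2 * c + (-4 : ℂ) * z^2 * l * w^2 * c^2 + (-4 : ℂ) * z^2 * l * w^2 * s + (-4 : ℂ) * z^2 * l * w^2 * s * c + (20 : ℂ) * z^2 * l^2 * w^2 * c + (20 : ℂ) * z^2 * l^2 * w^2 * c^2 + (12 : ℂ) * z^2 * l^2 * w^2 * s + (12 : ℂ) * z^2 * l^2 * w^2 * s * c + (-40 : ℂ) * z^2 * l^3 * w^2 * c + (-40 : ℂ) * z^2 * l^3 * w^2 * c^2 + (-8 : ℂ) * z^2 * l^3 * w^2 * s + (-8 : ℂ) * z^2 * l^3 * w^2 * s * c + (40 : ℂ) * z^2 * l^4 * w^2 * c + (40 : ℂ) * z^2 * l^4 * w^2 * c^2 + (-8 : ℂ) * z^2 * l^4 * w^2 * s + (-8 : ℂ) * z^2 * l^4 * w^2 * s * c + (-20 : ℂ) * z^2 * l^5 * w^2 * c + (-20 : ℂ)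 * z^2 * l^5 * w^2 * c^2 + (12 : ℂ) * z^2 * l^5 * w^2 * s + (12 : ℂ) * z^2 * l^5 * w^2 * s * c + (4 : ℂ) * z^2 * l^6 * w^2 * c + (4 : ℂ) * z^2 * l^6 * w^2 * c^2 + (-4 : ℂ) * z^2 * l^6 * w^2 * s + (-4 : ℂ) * z^2 * l^6 * w^2 * s * c + (4 : ℂ) * z^2 * a * l * w + (4 : ℂ) * z^2 * a * l * w * c^2 + (4 : ℂ) * z^2 * a * l * w * s + (4 : ℂ) * z^2 * a * l * w * s * c + (-12 : ℂ) * z^2 * a * l^2 * w + (-8 : ℂ) * z^2 * a * l^2 * w * c + (-20 : ℂ) * z^2 * a * l^2 * w * c^2 + (-12 : ℂ) * z^2 * a * l^2 * w * s + (-12 : ℂ) * z^2 * a * l^2 * w * s * c + (8 : ℂ) * z^2 * a * l^3 * w + (32 : ℂ) * z^2 * a * l^3 * w * c + (40 : ℂ) * z^2 * a * l^3 * w * c^2 + (8 : ℂ) * z^2 * a * l^3 * w * s + (8 : ℂ) * z^2 * a * l^3 * w * s * c + (8 : ℂ) * z^2 * a * l^4 * w + (-48 : ℂ) * z^2 * a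 * l^4 * w * c + (-40 : ℂ) * z^2 * a * l^4 * w * c^2 + (8 : ℂ) * z^2 * a * l^4 * w * s + (8 : ℂ) * z^2 * a * l^4 * w * s * c + (-12 : ℂ) * z^2 * a * l^5 * w + (32 : ℂ) * z^2 * a * l^5 * w * c + (20 : ℂ) * z^2 * a * l^5 * w * c^2 + (-12 : ℂ) * z^2 * a * l^5 * w * s + (-12 : ℂ) * z^2 * a * l^5 * w * s * c + (4 : ℂ) * z^2 * a * l^6 * w + (-8 : ℂ) * z^2 * a * l^6 * w * c + (-4 : ℂ) * z^2 * a * l^6 * w * c^2 + (4 : ℂ) * z^2 * a * l^6 * w * s + (4 : ℂ) * z^2 * a * l^6 * w * s * c) * hs +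
      ((4 : ℂ) * w^3 * c^2 + (4 : ℂ) * w^3 * c^3 + (-20 : ℂ) * l * w^3 * c^2 + (-20 : ℂ) * l * w^3 * c^3 + (40 : ℂ) * l^2 * w^3 * c^2 + (40 : ℂ) * l^2 * w^3 * c^3 + (-40 : ℂ) * l^3 * w^3 * c^2 + (-40 : ℂ) * l^3 * w^3 * c^3 + (20 : ℂ) * l^4 * w^3 * c^2 + (20 : ℂ) * l^4 * w^3 * c^3 + (-4 : ℂ) * l^5 * w^3 * c^2 + (-4 : ℂ) * l^5 * w^3 * c^3 + (-4 : ℂ) * a * l * w^2 * c + (-4 : ℂ) * a * l * w^2 * c^3 + (12 : ℂ) * a * l^2 * w^2 * c + (12 : ℂ) * a * l^2 * w^2 * c^3 + (-8 : ℂ) * a * l^3 * w^2 * c + (-8 : ℂ) * a * l^3 * w^2 * c^3 + (-8 : ℂ) * a * l^4 * w^2 * c + (-8 : ℂ) * a * l^4 * w^2 * c^3 + (12 : ℂ) * a * l^5 * w^2 * c + (12 : ℂ) * a * l^5 * w^2 * c^3 + (-4 : ℂ) * a * l^6 * w^2 * c + (-4 : ℂ) * a * l^6 * w^2 * c^3 +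 (8 : ℂ) * a^2 * l^2 * w * c + (8 : ℂ) * a^2 * l^2 * w * c^3 + (-16 : ℂ) * a^2 * l^3 * w * c + (-16 : ℂ) * a^2 * l^3 * w * c^3 + (16 : ℂ) * a^2 * l^5 * w * c + (16 : ℂ) * a^2 * l^5 * w * c^3 + (-8 : ℂ) * a^2 * l^6 * w * c + (-8 : ℂ) * a^2 * l^6 * w * c^3 + (-16 : ℂ) * a^3 * l^3 * c + (-16 : ℂ) * a^3 * l^3 * c^3 + (16 : ℂ) * a^3 * l^4 * c + (16 : ℂ) * a^3 * l^4 * c^3 + (16 : ℂ) * a^3 * l^5 * c + (16 : ℂ) * a^3 * l^5 * c^3 + (-16 : ℂ) * a^3 * l^6 * c + (-16 : ℂ) * a^3 * l^6 * c^3 + (-4 : ℂ) * z * w^2 * c + (-4 : ℂ) * z * w^2 * c^3 + (16 : ℂ) * z * l * w^2 * c + (16 : ℂ) * z * l * w^2 * c^3 + (-20 : ℂ) * z * l^2 * w^2 * c + (-20 : ℂ) * z * l^2 * w^2 * c^3 + (20 : ℂ) * z * l^4 * w^2 * c + (20 : ℂ) * z * l^4 * w^2 * c^3 + (-16 : ℂ)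 * z * l^5 * w^2 * c + (-16 : ℂ) * z * l^5 * w^2 * c^3 + (4 : ℂ) * z * l^6 * w^2 * c + (4 : ℂ) * z * l^6 * w^2 * c^3 + (8 : ℂ) * z * a * l * w * c + (8 : ℂ) * z * a * l * w * c^3 + (-24 : ℂ) * z * a * l^2 * w * c + (-24 : ℂ) * z * a * l^2 * w * c^3 + (16 : ℂ) * z * a * l^3 * w * c + (16 : ℂ) * z * a * l^3 * w * c^3 + (16 : ℂ) * z * a * l^4 * w * c + (16 : ℂ) * z * a * l^4 * w * c^3 + (-24 : ℂ) * z * a * l^5 * w * c + (-24 : ℂ) * z * a * l^5 * w * c^3 + (8 : ℂ) * z * a * l^6 * w * c + (8 : ℂ) * z * a * l^6 * w * c^3 + (-16 : ℂ) * z * a^2 * l^2 * c + (-16 : ℂ) * z * a^2 * l^2 * c^3 + (32 : ℂ) * z * a^2 * l^3 * c + (32 : ℂ) * z * a^2 * l^3 * c^3 + (-32 : ℂ) * z * a^2 * l^5 * c + (-32 : ℂ) * z * a^2 * l^5 * c^3 + (16 : ℂ) * z * a^2 * l^6 * c + (16 : ℂ) * z * a^2 * l^6 * c^3 + (4 : ℂ)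 * z^2 * l * w * c^2 + (4 : ℂ) * z^2 * l * w * c^3 + (-20 : ℂ) * z^2 * l^2 * w * c^2 + (-20 : ℂ) * z^2 * l^2 * w * c^3 + (40 : ℂ) * z^2 * l^3 * w * c^2 + (40 : ℂ) * z^2 * l^3 * w * c^3 + (-40 : ℂ) * z^2 * l^4 * w * c^2 + (-40 : ℂ) * z^2 * l^4 * w * c^3 + (20 : ℂ) * z^2 * l^5 * w * c^2 + (20 : ℂ) * z^2 * l^5 * w * c^3 + (-4 : ℂ) * z^2 * l^6 * w * c^2 + (-4 : ℂ) * z^2 * l^6 * w * c^3 + (-4 : ℂ) * z^2 * a * l * c + (-4 : ℂ) * z^2 * a * l * c^3 + (12 : ℂ) * z^2 * a * l^2 * c + (12 : ℂ) * z^2 * a * l^2 * c^3 + (-8 : ℂ) * z^2 * a * l^3 * c + (-8 : ℂ) * z^2 * a * l^3 * c^3 + (-8 : ℂ) * z^2 * a * l^4 * c + (-8 : ℂ) * z^2 * a * l^4 * c^3 + (12 : ℂ) * z^2 * a * l^5 * c + (12 : ℂ) * z^2 * a * l^5 * c^3 + (-4 : ℂ) * z^2 * a * l^6 * c + (-4 :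 ℂ) * z^2 * a * l^6 * c^3) * hw2 +
      ((-32 : ℂ) * a^4 * l^4 * c + (32 : ℂ) * a^4 * l^5 * c + (32 : ℂ) * a^4 * l^6 * c + (-32 : ℂ) * a^4 * l^7 * c + (-32 : ℂ) * z * a^3 * l^3 * c + (64 : ℂ) * z * a^3 * l^4 * c + (-64 : ℂ) * z * a^3 * l^6 * c + (32 : ℂ) * z * a^3 * l^7 * c + (-8 : ℂ) * z^2 * a^2 * l^2 * c + (24 : ℂ) * z^2 * a^2 * l^3 * c + (-16 : ℂ) * z^2 * a^2 * l^4 * c + (-16 : ℂ) * z^2 * a^2 * l^5 * c + (24 : ℂ) * z^2 * a^2 * l^6 * c + (-8 : ℂ) * z^2 * a^2 * l^7 * c) * hc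
section part2

variable {w : ℂ} {r : ℝ}

lemma eta_inv_eq (hw1 : w * (starRingEnd ℂ) w = 1) (u : ℂ) :
    (starRingEnd ℂ) w * (u - (r : ℂ) * w) / (1 - (starRingEnd ℂ) ((r : ℂ) * w) * u)
      = (-(r : ℂ) + (starRingEnd ℂ) w * u) / (1 + -((r : ℂ) * (starRingEnd ℂ) w) * u) := by
  have hconj : (starRingEnd ℂ) ((r : ℂ) * w) = (r : ℂ) * (starRingEnd ℂ) w := by
    rw [map_mul, Complex.conj_ofReal]
  rw [hconj]
  congr 1
  · linear_combination (-(r : ℂ)) * hw1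
  · ring

lemma eta_eq (w : ℂ) (r : ℝ) (u : ℂ) :
    w * (u - -(r : ℂ)) / (1 - (starRingEnd ℂ) (-(r : ℂ)) * u)
      = (w * (r : ℂ) + w * u) / (1 + (r : ℂ) * u) := by
  have hconj : (starRingEnd ℂ) (-(r : ℂ)) = -(r : ℂ) := by
    rw [map_neg, Complex.conj_ofReal]
  rw [hconj]
  congr 1
  · ring
  · ring

lemma abs_conj_one (hw : ‖w‖ = 1) : ‖(starRingEnd ℂ) w‖ = 1 := by
  rw [Complex.norm_conj]; exact hw

lemma mul_conj_one (hw : ‖w‖ = 1) : w * (starRingEnd ℂ) w = 1 := by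
  rw [Complex.mul_conj]
  norm_cast
  rw [Complex.normSq_eq_norm_sq, hw]; norm_num

-- |r * (cw * z)| < 1 style bound
lemma abs_mul_lt_one {x y : ℂ} (hx : ‖x‖ < 1) (hy : ‖y‖ < 1) :
    ‖x * y‖ < 1 := by
  rw [norm_mul]
  nlinarith [norm_nonneg x, norm_nonneg y]

lemma etainv_lt (hw : ‖w‖ = 1) (hr : |r| < 1) {z : ℂ} (hz : ‖z‖ < 1) :
    ‖(starRingEnd ℂ) w * (z - (r : ℂ) * w) / (1 - (starRingEnd ℂ) ((r : ℂ) * w) * z)‖ < 1 := by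
  have ha : ‖(r : ℂ) * w‖ < 1 := by
    rw [norm_mul, Complex.norm_real, Real.norm_eq_abs, hw, mul_one]; exact hr
  exact aut_maps ha (abs_conj_one hw) hz

lemma eta_lt (hw : ‖w‖ = 1) (hr : |r| < 1) {z : ℂ} (hz : ‖z‖ < 1) :
    ‖w * (z - -(r : ℂ)) / (1 - (starRingEnd ℂ) (-(r : ℂ)) * z)‖ < 1 := by
  have ha : ‖-(r : ℂ)‖ < 1 := by
    rw [norm_neg, Complex.norm_real, Real.norm_eq_abs]; exact hr
  exact aut_maps ha hw hz

end part2
lemma den_factor (r N D : ℂ) (hD : D ≠ 0) : (1 + r * (N / D)) * D = 1 * D + r * N := by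
  rw [add_mul, mul_assoc r (N/D) D, div_mul_cancel₀ _ hD]

lemma den_factor2 (c N D : ℂ) (hD : D ≠ 0) :
    (2 * c - (1 + c) * (N / D)) * D = 2 * c * D + -(1 + c) * N := by
  rw [sub_mul, mul_assoc (1+c) (N/D) D, div_mul_cancel₀ _ hD]
  ring

lemma inv_pair {w : ℂ} {r : ℝ} (hw : ‖w‖ = 1) (hr : |r| < 1)
    {z : ℂ} (hz : ‖z‖ < 1) :
    w * (((starRingEnd ℂ) w * (z - (r:ℂ)*w) / (1 - (starRingEnd ℂ) ((r:ℂ)*w) * z)) - -(r:ℂ)) /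
      (1 - (starRingEnd ℂ) (-(r:ℂ)) *
        ((starRingEnd ℂ) w * (z - (r:ℂ)*w) / (1 - (starRingEnd ℂ) ((r:ℂ)*w) * z))) = z ∧
    (starRingEnd ℂ) w * ((w * (z - -(r:ℂ)) / (1 - (starRingEnd ℂ) (-(r:ℂ)) * z)) - (r:ℂ)*w) /
      (1 - (starRingEnd ℂ) ((r:ℂ)*w) *
        (w * (z - -(r:ℂ)) / (1 - (starRingEnd ℂ) (-(r:ℂ)) * z))) = z := by
  have hw1 : w * (starRingEnd ℂ) w = 1 := mul_conj_one hw
  have hcwabs : ‖(starRingEnd ℂ) w‖ = 1 := abs_conj_one hw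
  have hrC : ‖(r:ℂ)‖ < 1 := by rwa [Complex.norm_real, Real.norm_eq_abs]
  constructor
  · rw [eta_inv_eq hw1 z, eta_eq w r _]
    have hD1 : (1:ℂ) + -((r:ℂ) * (starRingEnd ℂ) w) * z ≠ 0 := by
      apply one_add_ne
      have h1 : ‖-((r:ℂ) * (starRingEnd ℂ) w)‖ < 1 := by
        rw [norm_neg, norm_mul, Complex.norm_real, Real.norm_eq_abs, hcwabs, mul_one]; exact hr
      exact abs_mul_lt_one h1 hz
    have hplt : ‖(-(r:ℂ) + (starRingEnd ℂ) w * z) /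
        (1 + -((r:ℂ) * (starRingEnd ℂ) w) * z)‖ < 1 := by
      have h0 := etainv_lt hw hr hz
      rwa [eta_inv_eq hw1 z] at h0
    have hden : (1:ℂ) * (1 + -((r:ℂ) * (starRingEnd ℂ) w) * z)
        + (r:ℂ) * (-(r:ℂ) + (starRingEnd ℂ) w * z) ≠ 0 := by
      have h1 : (1:ℂ) + (r:ℂ) * ((-(r:ℂ) + (starRingEnd ℂ) w * z) /
          (1 + -((r:ℂ) * (starRingEnd ℂ) w) * z)) ≠ 0 :=
        one_add_ne (abs_mul_lt_one hrC hplt)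
      rw [← den_factor ((r:ℂ)) (-(r:ℂ) + (starRingEnd ℂ) w * z)
        (1 + -((r:ℂ) * (starRingEnd ℂ) w) * z) hD1]
      exact mul_ne_zero h1 hD1
    rw [mobius_frac (w*(r:ℂ)) w 1 (r:ℂ) (-(r:ℂ) + (starRingEnd ℂ) w * z)
      (1 + -((r:ℂ) * (starRingEnd ℂ) w) * z) hD1 hden]
    rw [div_eq_iff hden]
    linear_combination ((1 - (r:ℂ)^2) * z) * hw1
  · rw [eta_eq w r z, eta_inv_eq hw1 _]
    have hD0 : (1:ℂ) + (r:ℂ) * z ≠ 0 := one_add_ne (abs_mul_lt_one hrC hz)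
    have hqlt : ‖(w*(r:ℂ) + w*z) / (1 + (r:ℂ)*z)‖ < 1 := by
      have h0 := eta_lt hw hr hz
      rwa [eta_eq w r z] at h0
    have hden : (1:ℂ) * (1 + (r:ℂ)*z) + -((r:ℂ) * (starRingEnd ℂ) w) * (w*(r:ℂ) + w*z) ≠ 0 := by
      have habs : ‖-((r:ℂ) * (starRingEnd ℂ) w)‖ < 1 := by
        rw [norm_neg, norm_mul, Complex.norm_real, Real.norm_eq_abs, hcwabs, mul_one]; exact hr
      have h1 : (1:ℂ) + -((r:ℂ) * (starRingEnd ℂ) w) *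
          ((w*(r:ℂ) + w*z) / (1 + (r:ℂ)*z)) ≠ 0 :=
        one_add_ne (abs_mul_lt_one habs hqlt)
      rw [← den_factor (-((r:ℂ) * (starRingEnd ℂ) w)) (w*(r:ℂ) + w*z) (1 + (r:ℂ)*z) hD0]
      exact mul_ne_zero h1 hD0
    rw [mobius_frac (-(r:ℂ)) ((starRingEnd ℂ) w) 1 (-((r:ℂ) * (starRingEnd ℂ) w))
      (w*(r:ℂ) + w*z) (1 + (r:ℂ)*z) hD0 hden]
    rw [div_eq_iff hden]
    linear_combination (((r:ℂ) + z) * (1 + (r:ℂ)*z)) * hw1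

lemma conj_core {a l w c : ℂ} {s r : ℝ}
    (ha : ‖a‖ < 1) (hw : ‖w‖ = 1)
    (hcor : c = Complex.I ∨ c = -Complex.I)
    (H1 : (starRingEnd ℂ) a * w ^ 2 = -(l * a))
    (H2 : (l - 1) * w = 2 * (l * a))
    (hl1 : l ≠ 1) (hlm1 : l ≠ -1)
    (hrabs : |r| < 1)
    (hrC : (r : ℂ) * ((s : ℂ) + 1) = (s : ℂ) - 1)
    (hsC : (s : ℂ) * (l + 1) = -(c * (l - 1)))
    (hs1 : s + 1 ≠ 0)
    {z : ℂ} (hz : ‖z‖ < 1) :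
    l * (z - a) / (1 - (starRingEnd ℂ) a * z)
      = w * ((phiC c ((starRingEnd ℂ) w * (z - (r:ℂ)*w) / (1 - (starRingEnd ℂ) ((r:ℂ)*w) * z))) - -(r:ℂ)) /
        (1 - (starRingEnd ℂ) (-(r:ℂ)) *
          (phiC c ((starRingEnd ℂ) w * (z - (r:ℂ)*w) / (1 - (starRingEnd ℂ) ((r:ℂ)*w) * z)))) := by
  have hw1 : w * (starRingEnd ℂ) w = 1 := mul_conj_one hw
  have hcwabs : ‖(starRingEnd ℂ) w‖ = 1 := abs_conj_one hw
  have hw0 : w ≠ 0 := by intro h; rw [h] at hw; simp at hw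
  have hrC1 : ‖(r:ℂ)‖ < 1 := by rwa [Complex.norm_real, Real.norm_eq_abs]
  rw [eta_inv_eq hw1 z]
  have hD1 : (1:ℂ) + -((r:ℂ) * (starRingEnd ℂ) w) * z ≠ 0 := by
    apply one_add_ne
    have h1 : ‖-((r:ℂ) * (starRingEnd ℂ) w)‖ < 1 := by
      rw [norm_neg, norm_mul, Complex.norm_real, Real.norm_eq_abs, hcwabs, mul_one]; exact hrabs
    exact abs_mul_lt_one h1 hz
  have hplt : ‖(-(r:ℂ) + (starRingEnd ℂ) w * z) /
      (1 + -((r:ℂ) * (starRingEnd ℂ) w) * z)‖ < 1 := by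
    have h0 := etainv_lt hw hrabs hz
    rwa [eta_inv_eq hw1 z] at h0
  have hqD : 2 * c * (1 + -((r:ℂ) * (starRingEnd ℂ) w) * z)
      + -(1 + c) * (-(r:ℂ) + (starRingEnd ℂ) w * z) ≠ 0 := by
    rw [← den_factor2 c (-(r:ℂ) + (starRingEnd ℂ) w * z)
      (1 + -((r:ℂ) * (starRingEnd ℂ) w) * z) hD1]
    exact mul_ne_zero (phiC_den_ne hcor hplt) hD1
  rw [phiC_frac c (-(r:ℂ) + (starRingEnd ℂ) w * z) (1 + -((r:ℂ) * (starRingEnd ℂ) w) * z) hD1 hqD]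
  rw [eta_eq w r _]
  have hqlt : ‖((1 + c) * (1 + -((r:ℂ) * (starRingEnd ℂ) w) * z)
      + -2 * (-(r:ℂ) + (starRingEnd ℂ) w * z)) /
      (2 * c * (1 + -((r:ℂ) * (starRingEnd ℂ) w) * z)
      + -(1 + c) * (-(r:ℂ) + (starRingEnd ℂ) w * z))‖ < 1 := by
    have h0 := phiC_abs_lt hcor hplt
    rwa [phiC_frac c (-(r:ℂ) + (starRingEnd ℂ) w * z)
      (1 + -((r:ℂ) * (starRingEnd ℂ) w) * z) hD1 hqD] at h0
  have hden3 : (1:ℂ) * (2 * c * (1 + -((r:ℂ) * (starRingEnd ℂ) w) * z)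
      + -(1 + c) * (-(r:ℂ) + (starRingEnd ℂ) w * z))
      + (r:ℂ) * ((1 + c) * (1 + -((r:ℂ) * (starRingEnd ℂ) w) * z)
      + -2 * (-(r:ℂ) + (starRingEnd ℂ) w * z)) ≠ 0 := by
    have h1 : (1:ℂ) + (r:ℂ) * (((1 + c) * (1 + -((r:ℂ) * (starRingEnd ℂ) w) * z)
        + -2 * (-(r:ℂ) + (starRingEnd ℂ) w * z)) /
        (2 * c * (1 + -((r:ℂ) * (starRingEnd ℂ) w) * z)
        + -(1 + c) * (-(r:ℂ) + (starRingEnd ℂ) w * z))) ≠ 0 :=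
      one_add_ne (abs_mul_lt_one hrC1 hqlt)
    rw [← den_factor ((r:ℂ))
      ((1 + c) * (1 + -((r:ℂ) * (starRingEnd ℂ) w) * z) + -2 * (-(r:ℂ) + (starRingEnd ℂ) w * z))
      (2 * c * (1 + -((r:ℂ) * (starRingEnd ℂ) w) * z)
        + -(1 + c) * (-(r:ℂ) + (starRingEnd ℂ) w * z)) hqD]
    exact mul_ne_zero h1 hqD
  rw [mobius_frac (w*(r:ℂ)) w 1 (r:ℂ)
    ((1 + c) * (1 + -((r:ℂ) * (starRingEnd ℂ) w) * z) + -2 * (-(r:ℂ) + (starRingEnd ℂ) w * z))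
    (2 * c * (1 + -((r:ℂ) * (starRingEnd ℂ) w) * z)
      + -(1 + c) * (-(r:ℂ) + (starRingEnd ℂ) w * z)) hqD hden3]
  have hbz : (1:ℂ) - (starRingEnd ℂ) a * z ≠ 0 := by
    apply one_sub_ne
    have : ‖(starRingEnd ℂ) a‖ < 1 := by rwa [Complex.norm_conj]
    exact abs_mul_lt_one this hz
  rw [div_eq_div_iff hbz hden3]
  have hc2 := c_sq hcor
  have hM : w ^ 3 * (((s:ℝ):ℂ) + 1) ^ 2 * (l + 1) ^ 2 * (l - 1) ^ 4 ≠ 0 := by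
    have hsp : ((s:ℝ):ℂ) + 1 ≠ 0 := by
      have hcast : ((s:ℝ):ℂ) + 1 = ((s + 1 : ℝ) : ℂ) := by push_cast; ring
      rw [hcast]
      exact Complex.ofReal_ne_zero.mpr hs1
    have hlp : l + 1 ≠ 0 := by
      intro h; exact hlm1 (by linear_combination h)
    exact mul_ne_zero (mul_ne_zero (mul_ne_zero (pow_ne_zero _ hw0) (pow_ne_zero _ hsp))
      (pow_ne_zero _ hlp)) (pow_ne_zero _ (sub_ne_zero.mpr hl1))
  have hkey := key z a ((starRingEnd ℂ) a) l w ((starRingEnd ℂ) w) ((s:ℝ):ℂ) ((r:ℝ):ℂ) c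
    H1 hw1 hrC hsC H2 hc2
  have hcancel := mul_left_cancel₀ hM hkey
  linear_combination hcancel
lemma master {l : ℂ} (hl : ‖l‖ = 1) (hlm1 : l ≠ -1) :
    ((2 * l.im / Complex.normSq (l + 1) : ℝ) : ℂ) * (l + 1) = -(Complex.I * (l - 1)) := by
  have hlp : l + 1 ≠ 0 := fun h => hlm1 (by linear_combination h)
  have hnsq : Complex.normSq (l + 1) ≠ 0 := fun h => hlp (Complex.normSq_eq_zero.mp h)
  have hq : ((Complex.normSq (l + 1) : ℝ) : ℂ) = (l + 1) * ((starRingEnd ℂ) l + 1) := by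
    rw [← Complex.mul_conj, map_add, map_one]
  have hy : 2 * Complex.I * ((l.im : ℝ) : ℂ) = l - (starRingEnd ℂ) l := by
    rw [Complex.sub_conj]; push_cast; ring
  have hcl : l * (starRingEnd ℂ) l = 1 := mul_conj_one hl
  have hi : Complex.I ^ 2 = -1 := Complex.I_sq
  have hM : (2 : ℂ) * l * Complex.I ≠ 0 := by
    have hl0 : l ≠ 0 := fun h => by rw [h] at hl; simp at hl
    exact mul_ne_zero (mul_ne_zero two_ne_zero hl0) Complex.I_ne_zero
  have hbig : (2 * l * Complex.I) * (2 * ((l.im : ℝ) : ℂ) * (l + 1))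
      = (2 * l * Complex.I) * (-(Complex.I * (l - 1)) * ((Complex.normSq (l + 1) : ℝ) : ℂ)) := by
    linear_combination ((-2 : ℂ) * l * Complex.I ^ 2 + 2 * l ^ 2 * Complex.I ^ 2) * hq
      + ((2 : ℂ) * l + 2 * l ^ 2) * hy
      + ((-2 : ℂ) + (-2 : ℂ) * Complex.I ^ 2 + (-2 : ℂ) * l + 2 * l ^ 2 * Complex.I ^ 2) * hcl
      + ((-2 : ℂ) + (-2 : ℂ) * l + 2 * l ^ 2 + 2 * l ^ 3) * hi
  have hbig2 := mul_left_cancel₀ hM hbig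
  have hcast : ((2 * l.im / Complex.normSq (l + 1) : ℝ) : ℂ)
      = 2 * ((l.im : ℝ) : ℂ) / ((Complex.normSq (l + 1) : ℝ) : ℂ) := by push_cast; ring
  have hnC : ((Complex.normSq (l + 1) : ℝ) : ℂ) ≠ 0 := Complex.ofReal_ne_zero.mpr hnsq
  rw [hcast, div_mul_eq_mul_div, div_eq_iff hnC]
  linear_combination hbig2

/-- Every parabolic automorphism `φ` of the disc is conjugate in the
automorphism group to `φ_i` or to `φ_{−i}`: there is an automorphism `η` (with
compositional inverse `ηinv`) such that `φ = η ∘ φ_i ∘ ηinv` on `D` or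
`φ = η ∘ φ_{−i} ∘ ηinv` on `D`. -/
theorem stmt_11 (φ : ℂ → ℂ) (hφ : IsParabolicAut φ) :
    ∃ η ηinv : ℂ → ℂ, IsDiscAut η ∧ IsDiscAut ηinv ∧
      (∀ z : ℂ, ‖z‖ < 1 → η (ηinv z) = z ∧ ηinv (η z) = z) ∧
      ((∀ z : ℂ, ‖z‖ < 1 → φ z = η (phiC Complex.I (ηinv z))) ∨
       (∀ z : ℂ, ‖z‖ < 1 → φ z = η (phiC (-Complex.I) (ηinv z)))) := by
  obtain ⟨⟨a, l, ha, hl, hf⟩, hne, w, hw, hset⟩ := hφ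
  have hmem : ∀ x : ℂ, ‖x‖ ≤ 1 → φ x = x → x = w := by
    intro x h1 h2
    have hx : x ∈ {z : ℂ | ‖z‖ ≤ 1 ∧ φ z = z} := ⟨h1, h2⟩
    rw [hset] at hx
    exact hx
  have hw0 : w ≠ 0 := fun h => by rw [h] at hw; simp at hw
  have hl0 : l ≠ 0 := fun h => by rw [h] at hl; simp at hl
  have ha0 : a ≠ 0 := by
    intro h
    have h0 : φ 0 = 0 := by rw [hf 0, h]; simp
    have h1 := hmem 0 (by norm_num) h0
    rw [← h1] at hw
    simp at hw
  have hb0 : (starRingEnd ℂ) a ≠ 0 := by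
    intro h
    apply ha0
    have h2 := congrArg (starRingEnd ℂ) h
    simpa using h2
  have habsb : ‖(starRingEnd ℂ) a‖ = ‖a‖ := Complex.norm_conj a
  have hwfix : φ w = w := by
    have h1 : w ∈ ({w} : Set ℂ) := rfl
    rw [← hset] at h1
    exact h1.2
  have hdw : (1 : ℂ) - (starRingEnd ℂ) a * w ≠ 0 := by
    apply one_sub_ne
    rw [norm_mul, habsb, hw, mul_one]; exact ha
  have Qw : (starRingEnd ℂ) a * w ^ 2 + (l - 1) * w - l * a = 0 := by
    have h := hf w
    rw [hwfix, eq_comm, div_eq_iff hdw] at h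
    linear_combination h
  set z2 := -(l * a) / ((starRingEnd ℂ) a * w) with hz2def
  have hbw : (starRingEnd ℂ) a * w ≠ 0 := mul_ne_zero hb0 hw0
  have hz2rel : (starRingEnd ℂ) a * w * z2 = -(l * a) := by
    rw [hz2def]; field_simp
  have habsz2 : ‖z2‖ = 1 := by
    have h1 : ‖-(l * a)‖ = ‖a‖ := by
      rw [norm_neg, norm_mul, hl, one_mul]
    have h2 : ‖(starRingEnd ℂ) a * w‖ = ‖a‖ := by
      rw [norm_mul, habsb, hw, mul_one]
    have ha' : ‖a‖ ≠ 0 := fun h => ha0 (norm_eq_zero.mp h)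
    rw [hz2def, norm_div, h1, h2, div_self ha']
  have hdz2 : (1 : ℂ) - (starRingEnd ℂ) a * z2 ≠ 0 := by
    apply one_sub_ne
    rw [norm_mul, habsb, habsz2, mul_one]; exact ha
  have hfix2 : φ z2 = z2 := by
    rw [hf z2, div_eq_iff hdz2]
    have hM2 : ((starRingEnd ℂ) a) ^ 2 * w ^ 6 ≠ 0 :=
      mul_ne_zero (pow_ne_zero _ hb0) (pow_ne_zero _ hw0)
    have hbig : ((starRingEnd ℂ) a) ^ 2 * w ^ 6 * (l * (z2 - a))
        = ((starRingEnd ℂ) a) ^ 2 * w ^ 6 * (z2 * (1 - (starRingEnd ℂ) a * z2)) := by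
      linear_combination ((-1 : ℂ) * (starRingEnd ℂ) a * w ^ 5
          + (starRingEnd ℂ) a * l * w ^ 5 + (-1 : ℂ) * a * (starRingEnd ℂ) a * l * w ^ 4
          + z2 * ((starRingEnd ℂ) a) ^ 2 * w ^ 5) * hz2rel
        + ((-1 : ℂ) * a * (starRingEnd ℂ) a * l * w ^ 4) * Qw
    exact mul_left_cancel₀ hM2 hbig
  have hz2w : z2 = w := hmem z2 (le_of_eq habsz2) hfix2
  have H1 : (starRingEnd ℂ) a * w ^ 2 = -(l * a) := by
    rw [← hz2rel, hz2w]; ring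
  have H2 : (l - 1) * w = 2 * (l * a) := by linear_combination Qw - H1
  have hl1 : l ≠ 1 := by
    intro h
    apply ha0
    have h2 := H2
    rw [h] at h2
    have h3 : (2 : ℂ) * a = 0 := by linear_combination -h2
    rcases mul_eq_zero.mp h3 with h4 | h4
    · norm_num at h4
    · exact h4
  have hlm1 : l ≠ -1 := by
    intro h
    have h2 := H2
    rw [h] at h2
    have hwa : w = a := by linear_combination (-1 / 2 : ℂ) * h2
    rw [hwa] at hw
    exact (ne_of_lt ha) hw
  have him : l.im ≠ 0 := by
    intro h0
    have hn : Complex.normSq l = 1 := by rw [Complex.normSq_eq_norm_sq, hl]; norm_num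
    rw [Complex.normSq_apply, h0] at hn
    simp at hn
    rcases mul_self_eq_one_iff.mp hn with h1 | h1
    · exact hl1 (by apply Complex.ext <;> simp [h1, h0])
    · exact hlm1 (by apply Complex.ext <;> simp [h1, h0])
  have hlp1 : l + 1 ≠ 0 := fun h => hlm1 (by linear_combination h)
  have hnsqpos : 0 < Complex.normSq (l + 1) := Complex.normSq_pos.mpr hlp1
  set s : ℝ := 2 * |l.im| / Complex.normSq (l + 1) with hsdef
  have hspos : 0 < s := div_pos (mul_pos two_pos (abs_pos.mpr him)) hnsqpos
  have hsp1 : (0 : ℝ) < s + 1 := by linarith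
  set r : ℝ := (s - 1) / (s + 1) with hrdef
  have hrabs : |r| < 1 := by
    rw [abs_lt]
    constructor
    · rw [hrdef, lt_div_iff₀ hsp1]; linarith
    · rw [hrdef, div_lt_one hsp1]; linarith
  have hrC : (r : ℂ) * ((s : ℂ) + 1) = (s : ℂ) - 1 := by
    have h1 : r * (s + 1) = s - 1 := by rw [hrdef]; field_simp
    have h2 := congrArg (fun x : ℝ => (x : ℂ)) h1
    push_cast at h2
    exact h2
  have hmain := master hl hlm1
  rcases him.lt_or_gt with hyneg | hypos
  · have hsC : ((s : ℝ) : ℂ) * (l + 1) = -((-Complex.I) * (l - 1)) := by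
      have hseq : s = -(2 * l.im / Complex.normSq (l + 1)) := by
        rw [hsdef, abs_of_neg hyneg]; ring
      have hcast : ((s : ℝ) : ℂ) = -(((2 * l.im / Complex.normSq (l + 1) : ℝ)) : ℂ) := by
        rw [hseq]; push_cast; ring
      rw [hcast]
      linear_combination -hmain
    refine ⟨fun u => w * (u - -(r : ℂ)) / (1 - (starRingEnd ℂ) (-(r : ℂ)) * u),
        fun u => (starRingEnd ℂ) w * (u - (r : ℂ) * w) / (1 - (starRingEnd ℂ) ((r : ℂ) * w) * u),
        ⟨-(r : ℂ), w, by rw [norm_neg, Complex.norm_real, Real.norm_eq_abs]; exact hrabs, hw,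
          fun u => rfl⟩,
        ⟨(r : ℂ) * w, (starRingEnd ℂ) w,
          by rw [norm_mul, Complex.norm_real, Real.norm_eq_abs, hw, mul_one]; exact hrabs,
          abs_conj_one hw, fun u => rfl⟩,
        fun z hz => inv_pair hw hrabs hz,
        Or.inr ?_⟩
    intro z hz
    rw [hf z]
    exact conj_core ha hw (Or.inr rfl) H1 H2 hl1 hlm1 hrabs hrC hsC (ne_of_gt hsp1) hz
  · have hsC : ((s : ℝ) : ℂ) * (l + 1) = -(Complex.I * (l - 1)) := by
      have hseq : s = 2 * l.im / Complex.normSq (l + 1) := by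
        rw [hsdef, abs_of_pos hypos]
      rw [hseq]
      exact hmain
    refine ⟨fun u => w * (u - -(r : ℂ)) / (1 - (starRingEnd ℂ) (-(r : ℂ)) * u),
        fun u => (starRingEnd ℂ) w * (u - (r : ℂ) * w) / (1 - (starRingEnd ℂ) ((r : ℂ) * w) * u),
        ⟨-(r : ℂ), w, by rw [norm_neg, Complex.norm_real, Real.norm_eq_abs]; exact hrabs, hw,
          fun u => rfl⟩,
        ⟨(r : ℂ) * w, (starRingEnd ℂ) w,
          by rw [norm_mul, Complex.norm_real, Real.norm_eq_abs, hw, mul_one]; exact hrabs,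
          abs_conj_one hw, fun u => rfl⟩,
        fun z hz => inv_pair hw hrabs hz,
        Or.inl ?_⟩
    intro z hz
    rw [hf z]
    exact conj_core ha hw (Or.inl rfl) H1 H2 hl1 hlm1 hrabs hrC hsC (ne_of_gt hsp1) hz
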